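/- arXiv:1608.04461 — 15 statements merged into one kernel-verified Lean document; each statement's English description precedes it below -/
import Mathlib

section
/- Uniqueness of eigendecompositions (spectral core of Theorem 2). Let V be a real inner product space, u ∈ V, and d ∈ ℕ. Let (ω_i)_{i ∈ Fin d} and (ν_i)_{i ∈ Fin d} be orthonormal families in V with ∑ i, ω_i = u and ∑ i, ν_i = u, and with ⟪ω_i, ν_j⟫ ≥ 0 for all i, j. Suppose f, g : Fin d → ℝ satisfy ∑ i, f i • ω_i = ∑ i, g i • ν_i. Then for every t ∈ ℝ one has ∑_{i : f i = t} ω_i = ∑_{i : g i = t} ν_i; in particular f and g take the same values with the same multiplicities, and the corresponding 'projective units' (sums of frame vectors with a common eigenvalue) coincide. -/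
open scoped RealInnerProductSpace

/-- Uniqueness of eigendecompositions (spectral core of Theorem 2). -/
theorem eigendecomposition_unique
    {V : Type*} [NormedAddCommGroup V] [InnerProductSpace ℝ V]
    (u : V) (d : ℕ) (ω ν : Fin d → V)
    (hω : Orthonormal ℝ ω) (hν : Orthonormal ℝ ν)
    (hωsum : (∑ i, ω i) = u) (hνsum : (∑ i, ν i) = u)
    (hpos : ∀ i j, 0 ≤ ⟪ω i, ν j⟫)
    (f g : Fin d → ℝ)
    (hfg : (∑ i, f i • ω i) = ∑ i, g i • ν i) :
    ∀ t : ℝ,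
      ((∑ i ∈ Finset.univ.filter (fun i => f i = t), ω i)
        = ∑ i ∈ Finset.univ.filter (fun i => g i = t), ν i) ∧
      (Finset.univ.filter (fun i => f i = t)).card
        = (Finset.univ.filter (fun i => g i = t)).card := by
  classical
  have hωω : ∀ i k, ⟪ω i, ω k⟫ = if i = k then (1:ℝ) else 0 :=
    fun i k => orthonormal_iff_ite.mp hω i k
  have hνν : ∀ i k, ⟪ν i, ν k⟫ = if i = k then (1:ℝ) else 0 :=
    fun i k => orthonormal_iff_ite.mp hν i k
  set c : Fin d → Fin d → ℝ := fun i j => ⟪ω i, ν j⟫ with hc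
  -- row and column sums are 1
  have hrow : ∀ i, ∑ j, c i j = 1 := by
    intro i
    have h1 : ∑ j, c i j = ⟪ω i, ∑ j, ν j⟫ := (inner_sum _ _ _).symm
    rw [h1, hνsum, ← hωsum, inner_sum]
    simp [hωω]
  have hcol : ∀ j, ∑ i, c i j = 1 := by
    intro j
    have h1 : ∑ i, c i j = ⟪∑ i, ω i, ν j⟫ := (sum_inner _ _ _).symm
    rw [h1, hωsum, ← hνsum, sum_inner]
    simp [hνν]
  -- inner products of the two expansions
  have hA : ⟪(∑ i, f i • ω i), (∑ i, f i • ω i)⟫ = ∑ i, f i * f i := by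
    simpa using hω.inner_sum f f Finset.univ
  have hB : ⟪(∑ i, g i • ν i), (∑ i, g i • ν i)⟫ = ∑ i, g i * g i := by
    simpa using hν.inner_sum g g Finset.univ
  have hC : ⟪(∑ i, f i • ω i), (∑ j, g j • ν j)⟫ = ∑ i, ∑ j, f i * g j * c i j := by
    rw [sum_inner]
    refine Finset.sum_congr rfl fun i _ => ?_
    rw [inner_sum]
    refine Finset.sum_congr rfl fun j _ => ?_
    rw [real_inner_smul_left, real_inner_smul_right]
    ring
  have hCA : (∑ i, ∑ j, f i * g j * c i j) = ∑ i, f i * f i := by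
    rw [← hC, ← hA]; rw [hfg]
  have hCB : (∑ i, ∑ j, f i * g j * c i j) = ∑ i, g i * g i := by
    rw [← hC, ← hB]; rw [← hfg]
  -- the key vanishing sum
  have hS : (∑ i, ∑ j, c i j * (f i - g j) ^ 2) = 0 := by
    have expand : ∀ i j, c i j * (f i - g j) ^ 2
        = c i j * (f i * f i) - 2 * (f i * g j * c i j) + c i j * (g j * g j) := by
      intro i j; ring
    have e1 : (∑ i, ∑ j, c i j * (f i * f i)) = ∑ i, f i * f i := by
      refine Finset.sum_congr rfl fun i _ => ?_
      rw [← Finset.sum_mul, hrow]; ring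
    have e2 : (∑ i, ∑ j, c i j * (g j * g j)) = ∑ j, g j * g j := by
      rw [Finset.sum_comm]
      refine Finset.sum_congr rfl fun j _ => ?_
      rw [← Finset.sum_mul, hcol]; ring
    have e3 : (∑ i, ∑ j, 2 * (f i * g j * c i j)) = 2 * ∑ i, f i * f i := by
      rw [← hCA, Finset.mul_sum]
      refine Finset.sum_congr rfl fun i _ => ?_
      rw [Finset.mul_sum]
    have hBA : (∑ i, g i * g i) = ∑ i, f i * f i := hCB.symm.trans hCA
    calc (∑ i, ∑ j, c i j * (f i - g j) ^ 2)
        = ∑ i, ∑ j, (c i j * (f i * f i) - 2 * (f i * g j * c i j)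
            + c i j * (g j * g j)) := by simp_rw [expand]
      _ = (∑ i, ∑ j, c i j * (f i * f i)) - (∑ i, ∑ j, 2 * (f i * g j * c i j))
            + (∑ i, ∑ j, c i j * (g j * g j)) := by
          simp [Finset.sum_add_distrib, Finset.sum_sub_distrib]
      _ = 0 := by rw [e1, e2, e3, hBA]; ring
  -- each term vanishes
  have hterm : ∀ i j, c i j * (f i - g j) ^ 2 = 0 := by
    have h := (Finset.sum_eq_zero_iff_of_nonneg (fun i _ =>
      Finset.sum_nonneg fun j _ => mul_nonneg (hpos i j) (sq_nonneg _))).mp hS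
    intro i j
    have h2 := (Finset.sum_eq_zero_iff_of_nonneg (fun j _ =>
      mul_nonneg (hpos i j) (sq_nonneg _))).mp (h i (Finset.mem_univ i))
    exact h2 j (Finset.mem_univ j)
  have hkey : ∀ i j, c i j ≠ 0 → f i = g j := by
    intro i j hcij
    have := hterm i j
    rcases mul_eq_zero.mp this with h | h
    · exact absurd h hcij
    · have := pow_eq_zero_iff (n := 2) (by norm_num) |>.mp h
      linarith [sub_eq_zero.mp this]
  intro t
  set Sf := Finset.univ.filter (fun i => f i = t) with hSf
  set Sg := Finset.univ.filter (fun i => g i = t) with hSg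
  -- for i ∈ Sf, the row of c restricted to Sg sums to 1
  have hrowS : ∀ i ∈ Sf, ∑ j ∈ Sg, c i j = 1 := by
    intro i hi
    have hft : f i = t := (Finset.mem_filter.mp hi).2
    have : ∑ j ∈ Sg, c i j = ∑ j, c i j := by
      refine Finset.sum_subset (Finset.subset_univ _) ?_
      intro j _ hj
      by_contra hne
      exact hj (Finset.mem_filter.mpr ⟨Finset.mem_univ j, ((hkey i j hne).symm.trans hft)⟩)
    rw [this, hrow]
  have hcolS : ∀ j ∈ Sg, ∑ i ∈ Sf, c i j = 1 := by
    intro j hj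
    have hgt : g j = t := (Finset.mem_filter.mp hj).2
    have : ∑ i ∈ Sf, c i j = ∑ i, c i j := by
      refine Finset.sum_subset (Finset.subset_univ _) ?_
      intro i _ hi
      by_contra hne
      exact hi (Finset.mem_filter.mpr ⟨Finset.mem_univ i, ((hkey i j hne).trans hgt)⟩)
    rw [this, hcol]
  have hdouble1 : (∑ i ∈ Sf, ∑ j ∈ Sg, c i j) = (Sf.card : ℝ) := by
    rw [Finset.sum_congr rfl hrowS]; simp
  have hdouble2 : (∑ i ∈ Sf, ∑ j ∈ Sg, c i j) = (Sg.card : ℝ) := by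
    rw [Finset.sum_comm, Finset.sum_congr rfl hcolS]; simp
  have hcard : Sf.card = Sg.card := by
    exact_mod_cast hdouble1.symm.trans hdouble2
  refine ⟨?_, hcard⟩
  -- vector equality via vanishing norm
  set P := ∑ i ∈ Sf, ω i with hP
  set Q := ∑ j ∈ Sg, ν j with hQ
  have hPP : ⟪P, P⟫ = (Sf.card : ℝ) := by
    rw [hP, sum_inner]
    have : ∀ i ∈ Sf, ⟪ω i, ∑ k ∈ Sf, ω k⟫ = 1 := by
      intro i hi
      rw [inner_sum]
      simp [hωω, Finset.sum_ite_eq, hi]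
    rw [Finset.sum_congr rfl this]; simp
  have hQQ : ⟪Q, Q⟫ = (Sg.card : ℝ) := by
    rw [hQ, sum_inner]
    have : ∀ j ∈ Sg, ⟪ν j, ∑ k ∈ Sg, ν k⟫ = 1 := by
      intro j hj
      rw [inner_sum]
      simp [hνν, Finset.sum_ite_eq, hj]
    rw [Finset.sum_congr rfl this]; simp
  have hPQ : ⟪P, Q⟫ = (Sf.card : ℝ) := by
    rw [hP, hQ, sum_inner]
    have : ∀ i ∈ Sf, ⟪ω i, ∑ j ∈ Sg, ν j⟫ = 1 := by
      intro i hi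
      rw [inner_sum]
      exact hrowS i hi
    rw [Finset.sum_congr rfl this]; simp
  have hzero : ⟪P - Q, P - Q⟫ = 0 := by
    rw [inner_sub_sub_self, real_inner_comm P Q, hPP, hQQ, hPQ, hcard]
    ring
  have : P - Q = 0 := by
    exact inner_self_eq_zero.mp hzero
  exact sub_eq_zero.mp this
end

section
/- Well-definedness of spectral coefficients (hence of all spectral Rényi entropies). Let V be a real inner product space, u ∈ V, and d ∈ ℕ. Let (ω_j)_{j ∈ Fin d} and (ν_k)_{k ∈ Fin d} be orthonormal families in V with ∑ j, ω_j = u and ∑ k, ν_k = u, and with ⟪ω_j, ν_k⟫ ≥ 0 for all j, k. If p and q are probability vectors on Fin d with ∑ j, p j • ω_j = ∑ k, q k • ν_k, then there exists a permutation π of Fin d such that q = p ∘ π. In particular −∑ j, p j · log (p j) = −∑ k, q k · log (q k), so the spectral entropy of a state does not depend on the chosen decomposition into perfectly distinguishable pure states. -/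
open scoped RealInnerProductSpace

/-- Well-definedness of spectral coefficients (hence of all spectral Rényi
entropies): two decompositions of the same state into maximal frames have the
same coefficients up to a permutation, hence the same spectral entropy. -/
theorem spectral_coefficients_well_defined
    {V : Type*} [NormedAddCommGroup V] [InnerProductSpace ℝ V]
    (u : V) (d : ℕ) (ω ν : Fin d → V)
    (hω : Orthonormal ℝ ω) (hν : Orthonormal ℝ ν)
    (hωsum : (∑ j, ω j) = u) (hνsum : (∑ k, ν k) = u)
    (hpos : ∀ j k, 0 ≤ ⟪ω j, ν k⟫)
    (p q : Fin d → ℝ)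
    (hp : ∀ j, 0 ≤ p j) (hp1 : (∑ j, p j) = 1)
    (hq : ∀ k, 0 ≤ q k) (hq1 : (∑ k, q k) = 1)
    (hpq : (∑ j, p j • ω j) = ∑ k, q k • ν k) :
    (∃ π : Equiv.Perm (Fin d), q = p ∘ π) ∧
      (-∑ j, p j * Real.log (p j)) = -∑ k, q k * Real.log (q k) := by
  classical
  set M : Fin d → Fin d → ℝ := fun j k => ⟪ω j, ν k⟫ with hM
  have hωite := orthonormal_iff_ite.mp hω
  have hνite := orthonormal_iff_ite.mp hν
  -- row sums of M are 1
  have hrow : ∀ j, (∑ k, M j k) = 1 := by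
    intro j
    have : (∑ k, M j k) = ⟪ω j, ∑ k, ν k⟫ := (inner_sum _ _ _).symm
    rw [this, hνsum, ← hωsum, inner_sum]
    simp [hωite]
  have hcol : ∀ k, (∑ j, M j k) = 1 := by
    intro k
    have : (∑ j, M j k) = ⟪∑ j, ω j, ν k⟫ := (sum_inner _ _ _).symm
    rw [this, hωsum, ← hνsum, sum_inner]
    simp [hνite]
  -- p j = ∑ k, M j k * q k
  have hPj : ∀ j, p j = ∑ k, M j k * q k := by
    intro j
    have h1 : ⟪ω j, ∑ i, p i • ω i⟫ = p j := by
      rw [inner_sum]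
      simp [real_inner_smul_right, hωite]
    have h2 : ⟪ω j, ∑ k, q k • ν k⟫ = ∑ k, M j k * q k := by
      rw [inner_sum]
      simp [real_inner_smul_right, hM, mul_comm]
    rw [← h1, hpq, h2]
  -- ∑ p² = ∑ q²
  have hsumsq : (∑ j, p j ^ 2) = ∑ k, q k ^ 2 := by
    have h1 : ⟪∑ j, p j • ω j, ∑ j, p j • ω j⟫ = ∑ j, p j ^ 2 := by
      rw [hω.inner_sum]; simp [sq]
    have h2 : ⟪∑ k, q k • ν k, ∑ k, q k • ν k⟫ = ∑ k, q k ^ 2 := by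
      rw [hν.inner_sum]; simp [sq]
    rw [← h1, hpq, h2]
  -- the key quadratic identity
  have hkey : (∑ j, ∑ k, M j k * (q k - p j) ^ 2) = 0 := by
    have expand : ∀ j, (∑ k, M j k * (q k - p j) ^ 2)
        = (∑ k, M j k * q k ^ 2) - 2 * p j * (∑ k, M j k * q k)
          + p j ^ 2 * (∑ k, M j k) := by
      intro j
      rw [Finset.mul_sum, Finset.mul_sum, ← Finset.sum_sub_distrib, ← Finset.sum_add_distrib]
      exact Finset.sum_congr rfl fun k _ => by ring
    calc (∑ j, ∑ k, M j k * (q k - p j) ^ 2)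
        = ∑ j, ((∑ k, M j k * q k ^ 2) - 2 * p j * (∑ k, M j k * q k)
            + p j ^ 2 * (∑ k, M j k)) := Finset.sum_congr rfl fun j _ => expand j
      _ = (∑ j, ∑ k, M j k * q k ^ 2) - (∑ j, 2 * p j * (∑ k, M j k * q k))
            + ∑ j, p j ^ 2 * (∑ k, M j k) := by
          rw [← Finset.sum_sub_distrib, ← Finset.sum_add_distrib]
      _ = (∑ k, q k ^ 2) - 2 * (∑ j, p j ^ 2) + (∑ j, p j ^ 2) := by
          congr 1
          · congr 1
            · rw [Finset.sum_comm]
              rw [Finset.sum_congr rfl fun k _ => by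
                rw [← Finset.sum_mul, hcol k, one_mul]]
            · rw [Finset.mul_sum]
              exact Finset.sum_congr rfl fun j _ => by rw [← hPj j]; ring
          · exact Finset.sum_congr rfl fun j _ => by rw [hrow j, mul_one]
      _ = 0 := by rw [← hsumsq]; ring
  -- all terms vanish
  have hzero : ∀ j k, M j k * (q k - p j) ^ 2 = 0 := by
    have h1 := (Finset.sum_eq_zero_iff_of_nonneg (fun j _ =>
      Finset.sum_nonneg fun k _ => mul_nonneg (hpos j k) (sq_nonneg _))).mp hkey
    intro j k
    have h2 := (Finset.sum_eq_zero_iff_of_nonneg (fun k _ =>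
      mul_nonneg (hpos j k) (sq_nonneg _))).mp (h1 j (Finset.mem_univ j))
    exact h2 k (Finset.mem_univ k)
  have hMpq : ∀ j k, M j k ≠ 0 → q k = p j := by
    intro j k hMne
    have := hzero j k
    rcases mul_eq_zero.mp this with h | h
    · exact absurd h hMne
    · have := pow_eq_zero_iff (n := 2) (by norm_num) |>.mp h
      linarith [sub_eq_zero.mp this]
  -- fiber counting
  have hcount : ∀ c : ℝ, (Finset.univ.filter fun k => q k = c).card
      = (Finset.univ.filter fun j => p j = c).card := by
    intro c
    have hrowc : ∀ j, (∑ k ∈ Finset.univ.filter fun k => q k = c, M j k)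
        = if p j = c then 1 else 0 := by
      intro j
      by_cases hpc : p j = c
      · have hnot : (∑ k ∈ Finset.univ.filter fun k => ¬ q k = c, M j k) = 0 :=
          Finset.sum_eq_zero fun k hk => by
            by_contra hne
            have := hMpq j k hne
            exact (Finset.mem_filter.mp hk).2 (this.trans hpc)
        have := Finset.sum_filter_add_sum_filter_not Finset.univ
          (fun k => q k = c) (M j)
        rw [hnot, add_zero] at this
        rw [this, hrow j, if_pos hpc]
      · rw [if_neg hpc]
        exact Finset.sum_eq_zero fun k hk => by
          by_contra hne
          exact hpc ((hMpq j k hne).symm.trans (Finset.mem_filter.mp hk).2)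
    have : ((Finset.univ.filter fun k => q k = c).card : ℝ)
        = ((Finset.univ.filter fun j => p j = c).card : ℝ) := by
      calc ((Finset.univ.filter fun k => q k = c).card : ℝ)
          = ∑ k ∈ Finset.univ.filter fun k => q k = c, (1 : ℝ) := by
            rw [Finset.sum_const, nsmul_eq_mul, mul_one]
        _ = ∑ k ∈ Finset.univ.filter fun k => q k = c, ∑ j, M j k := by
            exact Finset.sum_congr rfl fun k _ => (hcol k).symm
        _ = ∑ j, ∑ k ∈ Finset.univ.filter fun k => q k = c, M j k :=
            Finset.sum_comm
        _ = ∑ j, if p j = c then (1 : ℝ) else 0 :=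
            Finset.sum_congr rfl fun j _ => hrowc j
        _ = ((Finset.univ.filter fun j => p j = c).card : ℝ) := by
            rw [Finset.sum_boole]
    exact_mod_cast this
  -- build the permutation
  have hfib : ∀ c : ℝ, Fintype.card {k : Fin d // q k = c}
      = Fintype.card {j : Fin d // p j = c} := by
    intro c
    rw [Fintype.card_subtype, Fintype.card_subtype]
    exact hcount c
  let e : ∀ c : ℝ, {k : Fin d // q k = c} ≃ {j : Fin d // p j = c} :=
    fun c => Fintype.equivOfCardEq (hfib c)
  let π : Equiv.Perm (Fin d) := Equiv.ofFiberEquiv e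
  have hπ : ∀ k, p (π k) = q k := fun k => Equiv.ofFiberEquiv_map e k
  have hqp : q = p ∘ π := funext fun k => (hπ k).symm
  refine ⟨⟨π, hqp⟩, ?_⟩
  rw [hqp]
  have := Equiv.sum_comp π (fun j => p j * Real.log (p j))
  simp only [Function.comp]
  rw [this]
end

section
/- Klein's inequality (Theorem 6, spectral form). Let V be a real inner product space, u ∈ V, and d ∈ ℕ. Let (ω_j)_{j ∈ Fin d} and (ν_k)_{k ∈ Fin d} be families in V with ∑ j, ω_j = u, ∑ k, ν_k = u, ⟪ω_j, u⟫ = 1 and ⟪ν_k, u⟫ = 1 for all j, k, and ⟪ω_j, ν_k⟫ ≥ 0 for all j, k. Let p and q be probability vectors on Fin d with q k > 0 for all k, and set ω := ∑ j, p j • ω_j. Then ∑ j, p j · log (p j) − ∑ k, ⟪ω, ν_k⟫ · log (q k) ≥ 0. (Equivalently, the relative entropy S(ω‖ν) = −S(ω) − ⟪ω, log ν⟫ is nonnegative, where ν = ∑ k, q k • ν_k and log ν = ∑ k, log (q k) • ν_k.) -/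
open scoped RealInnerProductSpace

lemma klein_pointwise (x y : ℝ) (hx : 0 ≤ x) (hy : 0 < y) :
    x - y ≤ x * Real.log x - x * Real.log y := by
  rcases eq_or_lt_of_le hx with h | h
  · simp [← h]; linarith
  · have hlog := Real.log_le_sub_one_of_pos (show 0 < y / x by positivity)
    rw [Real.log_div hy.ne' h.ne'] at hlog
    have h2 : x * (Real.log y - Real.log x) ≤ x * (y / x - 1) :=
      mul_le_mul_of_nonneg_left hlog h.le
    have h3 : x * (y / x - 1) = y - x := by field_simp
    rw [h3, mul_sub] at h2
    linarith

/-- Klein's inequality (Theorem 6, spectral form): the relative entropy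
`S(ω‖ν) = ∑ j, p j · log (p j) − ∑ k, ⟪ω, ν k⟫ · log (q k)` is nonnegative. -/
theorem klein_inequality
    {V : Type*} [NormedAddCommGroup V] [InnerProductSpace ℝ V]
    (u : V) (d : ℕ) (ω ν : Fin d → V)
    (hωsum : (∑ j, ω j) = u) (hνsum : (∑ k, ν k) = u)
    (hωn : ∀ j, ⟪ω j, u⟫ = 1) (hνn : ∀ k, ⟪ν k, u⟫ = 1)
    (hpos : ∀ j k, 0 ≤ ⟪ω j, ν k⟫)
    (p q : Fin d → ℝ)
    (hp : ∀ j, 0 ≤ p j) (hp1 : (∑ j, p j) = 1)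
    (hq : ∀ k, 0 ≤ q k) (hq1 : (∑ k, q k) = 1)
    (hqpos : ∀ k, 0 < q k) :
    (∑ j, p j * Real.log (p j))
      - (∑ k, ⟪(∑ j, p j • ω j), ν k⟫ * Real.log (q k)) ≥ 0 := by
  set c : Fin d → Fin d → ℝ := fun j k => ⟪ω j, ν k⟫ with hc
  have hrow : ∀ j, (∑ k, c j k) = 1 := by
    intro j
    simp only [hc, ← inner_sum, hνsum, hωn]
  have hcol : ∀ k, (∑ j, c j k) = 1 := by
    intro k
    simp only [hc, ← sum_inner, hωsum]
    rw [real_inner_comm]; exact hνn k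
  have hIP : ∀ k, ⟪(∑ j, p j • ω j), ν k⟫ = ∑ j, p j * c j k := by
    intro k
    rw [sum_inner]
    simp [real_inner_smul_left, hc]
  have h1 : (∑ k, ⟪(∑ j, p j • ω j), ν k⟫ * Real.log (q k))
      = ∑ j, ∑ k, c j k * (p j * Real.log (q k)) := by
    simp only [hIP, Finset.sum_mul]
    rw [Finset.sum_comm]
    exact Finset.sum_congr rfl fun j _ => Finset.sum_congr rfl fun k _ => by ring
  have h2 : (∑ j, p j * Real.log (p j))
      = ∑ j, ∑ k, c j k * (p j * Real.log (p j)) := by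
    refine Finset.sum_congr rfl fun j _ => ?_
    rw [← Finset.sum_mul, hrow j, one_mul]
  rw [h1, h2]
  have zero : (∑ j, ∑ k, c j k * (p j - q k)) = 0 := by
    have e1 : (∑ j : Fin d, ∑ k : Fin d, c j k * p j) = 1 := by
      calc (∑ j : Fin d, ∑ k : Fin d, c j k * p j)
          = ∑ j : Fin d, (∑ k, c j k) * p j := by
            exact Finset.sum_congr rfl fun j _ => (Finset.sum_mul _ _ _).symm
        _ = ∑ j, p j := by simp [hrow]
        _ = 1 := hp1
    have e2 : (∑ j : Fin d, ∑ k : Fin d, c j k * q k) = 1 := by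
      rw [Finset.sum_comm]
      calc (∑ k : Fin d, ∑ j : Fin d, c j k * q k)
          = ∑ k : Fin d, (∑ j, c j k) * q k := by
            exact Finset.sum_congr rfl fun k _ => (Finset.sum_mul _ _ _).symm
        _ = ∑ k, q k := by simp [hcol]
        _ = 1 := hq1
    simp only [mul_sub, Finset.sum_sub_distrib]
    rw [e1, e2]; ring
  have step : (∑ j, ∑ k, c j k * (p j - q k))
      ≤ ∑ j, ∑ k, (c j k * (p j * Real.log (p j)) - c j k * (p j * Real.log (q k))) := by
    refine Finset.sum_le_sum fun j _ => Finset.sum_le_sum fun k _ => ?_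
    have := mul_le_mul_of_nonneg_left (klein_pointwise (p j) (q k) (hp j) (hqpos k)) (hpos j k)
    calc c j k * (p j - q k)
        ≤ c j k * (p j * Real.log (p j) - p j * Real.log (q k)) := this
      _ = c j k * (p j * Real.log (p j)) - c j k * (p j * Real.log (q k)) := by ring
  rw [ge_iff_le, ← zero]
  calc (∑ j, ∑ k, c j k * (p j - q k))
      ≤ ∑ j, ∑ k, (c j k * (p j * Real.log (p j)) - c j k * (p j * Real.log (q k))) := step
    _ = (∑ j, ∑ k, c j k * (p j * Real.log (p j)))
        - ∑ j, ∑ k, c j k * (p j * Real.log (q k)) := by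
          simp [Finset.sum_sub_distrib]
end

section
/- The second law for projective measurements (Theorem 4, spectral form). Let V be a real inner product space, u ∈ V, and d ∈ ℕ. Let (e_i)_{i ∈ Fin d} be an orthonormal family with ∑ i, e_i = u, and let (ω_j)_{j ∈ Fin d} be a family with ∑ j, ω_j = u, ⟪u, ω_j⟫ = 1 for all j, and ⟪e_i, ω_j⟫ ≥ 0 for all i, j. Let p be a probability vector on Fin d, set ω := ∑ j, p j • ω_j and q i := ⟪e_i, ω⟫. Then −∑ i, q i · log (q i) ≥ −∑ j, p j · log (p j). (Here q is the vector of spectral coefficients of the post-measurement ensemble state ω' = ∑_a P_a ω of a projective measurement whose eigenfaces are spanned by blocks of the frame (e_i); thus projective measurements do not decrease spectral entropy.) -/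
open scoped RealInnerProductSpace

/-- The second law for projective measurements (Theorem 4, spectral form):
the spectral entropy of the post-measurement ensemble state is at least the
spectral entropy of the initial state. -/
theorem second_law_projective_measurements
    {V : Type*} [NormedAddCommGroup V] [InnerProductSpace ℝ V]
    (u : V) (d : ℕ) (e ω : Fin d → V)
    (he : Orthonormal ℝ e) (hesum : (∑ i, e i) = u)
    (hωsum : (∑ j, ω j) = u) (hωn : ∀ j, ⟪u, ω j⟫ = 1)
    (hpos : ∀ i j, 0 ≤ ⟪e i, ω j⟫)
    (p : Fin d → ℝ) (hp : ∀ j, 0 ≤ p j) (hp1 : (∑ j, p j) = 1)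
    (q : Fin d → ℝ) (hq : ∀ i, q i = ⟪e i, (∑ j, p j • ω j)⟫) :
    (-∑ i, q i * Real.log (q i)) ≥ -∑ j, p j * Real.log (p j) := by
  set M : Fin d → Fin d → ℝ := fun i j => ⟪e i, ω j⟫ with hM
  have hrow : ∀ i, (∑ j, M i j) = 1 := by
    intro i
    have : (∑ j, M i j) = ⟪e i, u⟫ := by
      rw [← hωsum, inner_sum]
    rw [this, ← hesum, inner_sum]
    rw [orthonormal_iff_ite] at he
    simp [he]
  have hcol : ∀ j, (∑ i, M i j) = 1 := by
    intro j
    have : (∑ i, M i j) = ⟪u, ω j⟫ := by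
      rw [← hesum, sum_inner]
    rw [this, hωn]
  have hqM : ∀ i, q i = ∑ j, M i j * p j := by
    intro i
    rw [hq, inner_sum]
    simp [real_inner_smul_right, mul_comm, hM]
  have key : ∀ i, (∑ j, M i j * Real.negMulLog (p j)) ≤ Real.negMulLog (q i) := by
    intro i
    have := Real.concaveOn_negMulLog.le_map_sum
      (t := Finset.univ) (w := M i) (p := p)
      (fun j _ => hpos i j) (hrow i) (fun j _ => hp j)
    simpa [hqM i, smul_eq_mul] using this
  have hsum : (∑ j, Real.negMulLog (p j)) ≤ ∑ i, Real.negMulLog (q i) := by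
    calc (∑ j, Real.negMulLog (p j))
        = ∑ j, (∑ i, M i j) * Real.negMulLog (p j) := by
          simp [hcol]
      _ = ∑ i, ∑ j, M i j * Real.negMulLog (p j) := by
          rw [Finset.sum_comm]
          simp [Finset.sum_mul]
      _ ≤ ∑ i, Real.negMulLog (q i) := Finset.sum_le_sum fun i _ => key i
  have h1 : (-∑ j, p j * Real.log (p j)) = ∑ j, Real.negMulLog (p j) := by
    simp [Real.negMulLog, Finset.sum_neg_distrib]
  have h2 : (-∑ i, q i * Real.log (q i)) = ∑ i, Real.negMulLog (q i) := by
    simp [Real.negMulLog, Finset.sum_neg_distrib]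
  rw [ge_iff_le, h1, h2]
  exact hsum
end

section
/- Concavity of spectral entropy (Theorem 5, spectral form). Let V be a real inner product space, u ∈ V, and d, n ∈ ℕ. Let (μ_m)_{m ∈ Fin d} be an orthonormal family with ∑ m, μ_m = u. For each j ∈ Fin n let (ν_{j,k})_{k ∈ Fin d} be a family with ∑ k, ν_{j,k} = u, ⟪ν_{j,k}, u⟫ = 1 for all k, and ⟪ν_{j,k}, μ_m⟫ ≥ 0 for all k, m. Let p be a probability vector on Fin n, for each j let q_j be a probability vector on Fin d, and let r be a probability vector on Fin d with r m > 0 for all m. If ∑ j, p j • (∑ k, q_j k • ν_{j,k}) = ∑ m, r m • μ_m, then −∑ m, r m · log (r m) ≥ ∑ j, p j · (−∑ k, q_j k · log (q_j k)). (That is, S(∑ j p j ω_j) ≥ ∑ j p j S(ω_j): spectral entropy is concave, so mixing does not decrease entropy.) -/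
open scoped RealInnerProductSpace

/-- Concavity of spectral entropy (Theorem 5, spectral form):
`S(∑ j p j ω_j) ≥ ∑ j p j S(ω_j)`, so mixing does not decrease entropy. -/
theorem spectral_entropy_concave
    {V : Type*} [NormedAddCommGroup V] [InnerProductSpace ℝ V]
    (u : V) (d n : ℕ) (μ : Fin d → V)
    (hμ : Orthonormal ℝ μ) (hμsum : (∑ m, μ m) = u)
    (ν : Fin n → Fin d → V)
    (hνsum : ∀ j, (∑ k, ν j k) = u)
    (hνn : ∀ j k, ⟪ν j k, u⟫ = 1)
    (hpos : ∀ j k m, 0 ≤ ⟪ν j k, μ m⟫)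
    (p : Fin n → ℝ) (hp : ∀ j, 0 ≤ p j) (hp1 : (∑ j, p j) = 1)
    (q : Fin n → Fin d → ℝ) (hq : ∀ j k, 0 ≤ q j k) (hq1 : ∀ j, (∑ k, q j k) = 1)
    (r : Fin d → ℝ) (hr : ∀ m, 0 < r m) (hr1 : (∑ m, r m) = 1)
    (hmix : (∑ j, p j • (∑ k, q j k • ν j k)) = ∑ m, r m • μ m) :
    (-∑ m, r m * Real.log (r m)) ≥ ∑ j, p j * (-∑ k, q j k * Real.log (q j k)) := by
  have hite : ∀ i j : Fin d, ⟪μ i, μ j⟫ = if i = j then 1 else 0 :=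
    orthonormal_iff_ite.mp hμ
  set A : Fin n → Fin d → Fin d → ℝ := fun j k m => ⟪ν j k, μ m⟫ with hA
  have hA0 : ∀ j k m, 0 ≤ A j k m := hpos
  have hArow : ∀ j k, (∑ m, A j k m) = 1 := by
    intro j k
    have : (∑ m, A j k m) = ⟪ν j k, ∑ m, μ m⟫ := (inner_sum _ _ _).symm
    rw [this, hμsum]; exact hνn j k
  have hAcol : ∀ j m, (∑ k, A j k m) = 1 := by
    intro j m
    have h1 : (∑ k, A j k m) = ⟪∑ k, ν j k, μ m⟫ := (sum_inner _ _ _).symm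
    rw [h1, hνsum, ← hμsum, sum_inner]
    simp [hite]
  have hrm : ∀ m, r m = ∑ j, p j * ∑ k, q j k * A j k m := by
    intro m
    have h := congrArg (fun v => ⟪v, μ m⟫) hmix
    simp only [sum_inner, real_inner_smul_left, hite, mul_ite, mul_one, mul_zero,
      Finset.sum_ite_eq', Finset.mem_univ, if_true, inner_sum] at h
    exact h.symm
  -- Main inequality
  have key : (∑ m, r m * Real.log (r m)) ≤ ∑ j, ∑ k, p j * q j k * Real.log (q j k) := by
    have hL : (∑ m, r m * Real.log (r m))
        = ∑ m, ∑ j, ∑ k, p j * q j k * A j k m * Real.log (r m) := by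
      refine Finset.sum_congr rfl fun m _ => ?_
      rw [hrm m, Finset.sum_mul]
      refine Finset.sum_congr rfl fun j _ => ?_
      rw [mul_assoc, Finset.sum_mul, Finset.mul_sum]
      refine Finset.sum_congr rfl fun k _ => ?_
      ring
    have hR : (∑ j, ∑ k, p j * q j k * Real.log (q j k))
        = ∑ m, ∑ j, ∑ k, p j * q j k * A j k m * Real.log (q j k) := by
      rw [Finset.sum_comm (f := fun m j => ∑ k, p j * q j k * A j k m * Real.log (q j k))]
      refine Finset.sum_congr rfl fun j _ => ?_
      rw [Finset.sum_comm (f := fun m k => p j * q j k * A j k m * Real.log (q j k))]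
      refine Finset.sum_congr rfl fun k _ => ?_
      rw [← Finset.sum_mul, ← Finset.mul_sum, hArow, mul_one]
    rw [hL, hR, ← sub_nonpos]
    have step : ∀ m ∈ Finset.univ, ∀ j ∈ (Finset.univ : Finset (Fin n)),
        ∀ k ∈ (Finset.univ : Finset (Fin d)),
        p j * q j k * A j k m * Real.log (r m) - p j * q j k * A j k m * Real.log (q j k)
          ≤ p j * A j k m * r m - p j * q j k * A j k m := by
      intro m _ j _ k _
      rcases eq_or_lt_of_le (hq j k) with h0 | hqpos
      · rw [← h0]
        simp [mul_nonneg (mul_nonneg (hp j) (hA0 j k m)) (hr m).le]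
      · have hratio : 0 < r m / q j k := div_pos (hr m) hqpos
        have hlog : Real.log (r m) - Real.log (q j k) ≤ r m / q j k - 1 := by
          rw [← Real.log_div (hr m).ne' hqpos.ne']
          exact Real.log_le_sub_one_of_pos hratio
        have hw : 0 ≤ p j * q j k * A j k m :=
          mul_nonneg (mul_nonneg (hp j) (hq j k)) (hA0 j k m)
        calc p j * q j k * A j k m * Real.log (r m)
              - p j * q j k * A j k m * Real.log (q j k)
            = p j * q j k * A j k m * (Real.log (r m) - Real.log (q j k)) := by ring
          _ ≤ p j * q j k * A j k m * (r m / q j k - 1) := by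
              exact mul_le_mul_of_nonneg_left hlog hw
          _ = p j * A j k m * r m - p j * q j k * A j k m := by
              field_simp
    have hsum1 : (∑ m, ∑ j, ∑ k, (p j * A j k m * r m - p j * q j k * A j k m)) = 0 := by
      simp only [Finset.sum_sub_distrib]
      have e1 : (∑ m, ∑ j, ∑ k, p j * A j k m * r m) = 1 := by
        have : ∀ m, (∑ j, ∑ k, p j * A j k m * r m) = r m := by
          intro m
          have : ∀ j, (∑ k, p j * A j k m * r m) = p j * r m := by
            intro j
            rw [← Finset.sum_mul, ← Finset.mul_sum, hAcol, mul_one]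
          simp only [this, ← Finset.sum_mul, hp1, one_mul]
        simp only [this, hr1]
      have e2 : (∑ m, ∑ j, ∑ k, p j * q j k * A j k m) = 1 := by
        rw [Finset.sum_comm (f := fun m j => ∑ k, p j * q j k * A j k m)]
        have : ∀ j, (∑ m, ∑ k, p j * q j k * A j k m) = p j := by
          intro j
          rw [Finset.sum_comm (f := fun m k => p j * q j k * A j k m)]
          have : ∀ k, (∑ m, p j * q j k * A j k m) = p j * q j k := by
            intro k
            rw [← Finset.mul_sum, hArow, mul_one]
          simp only [this, ← Finset.mul_sum, hq1, mul_one]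
        simp only [this, hp1]
      rw [e1, e2, sub_self]
    have hdiff : (∑ m, ∑ j, ∑ k, (p j * q j k * A j k m * Real.log (r m)
            - p j * q j k * A j k m * Real.log (q j k))) ≤ 0 := by
      calc (∑ m, ∑ j, ∑ k, (p j * q j k * A j k m * Real.log (r m)
              - p j * q j k * A j k m * Real.log (q j k)))
          ≤ ∑ m, ∑ j, ∑ k, (p j * A j k m * r m - p j * q j k * A j k m) := by
            refine Finset.sum_le_sum fun m hm => Finset.sum_le_sum fun j hj =>
              Finset.sum_le_sum fun k hk => step m hm j hj k hk
        _ = 0 := hsum1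
    simpa only [Finset.sum_sub_distrib] using hdiff
  have : (∑ j, p j * (-∑ k, q j k * Real.log (q j k)))
      = -∑ j, ∑ k, p j * q j k * Real.log (q j k) := by
    rw [← Finset.sum_neg_distrib]
    refine Finset.sum_congr rfl fun j _ => ?_
    rw [mul_neg, Finset.mul_sum]
    congr 1
    exact Finset.sum_congr rfl fun k _ => by ring
  rw [this, ge_iff_le, neg_le_neg_iff]
  exact key
end

section
/- Measurement Shannon entropy dominates spectral entropy (Theorem 7, spectral form, Shannon case). Let V be a real inner product space, u ∈ V, and d, N ∈ ℕ. Let (ω_j)_{j ∈ Fin d} satisfy ∑ j, ω_j = u and ⟪u, ω_j⟫ = 1 for all j. Let (ν_l)_{l ∈ Fin N} and c : Fin N → ℝ satisfy 0 ≤ c l ≤ 1, ⟪u, ν_l⟫ = 1, ∑ l, c l • ν_l = u, and ⟪ν_l, ω_j⟫ ≥ 0 for all l, j. Let p be a probability vector on Fin d, set ω := ∑ j, p j • ω_j and q l := c l · ⟪ν_l, ω⟫. Then −∑ l, q l · log (q l) ≥ −∑ j, p j · log (p j). (The q l are the outcome probabilities on ω of a fine-grained measurement with effects e_l = c l • ν_l;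 thus the Shannon measurement entropy Ŝ(ω) is at least the spectral entropy S(ω).) -/
open scoped RealInnerProductSpace

/-- Measurement Shannon entropy dominates spectral entropy (Theorem 7,
spectral form, Shannon case): the Shannon entropy of the outcome
probabilities of any fine-grained measurement on a state is at least the
spectral entropy of the state. -/
theorem measurement_entropy_ge_spectral_entropy
    {V : Type*} [NormedAddCommGroup V] [InnerProductSpace ℝ V]
    (u : V) (d N : ℕ) (ω : Fin d → V)
    (hωsum : (∑ j, ω j) = u) (hωn : ∀ j, ⟪u, ω j⟫ = 1)
    (ν : Fin N → V) (c : Fin N → ℝ)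
    (hc0 : ∀ l, 0 ≤ c l) (hc1 : ∀ l, c l ≤ 1)
    (hνn : ∀ l, ⟪u, ν l⟫ = 1)
    (hcsum : (∑ l, c l • ν l) = u)
    (hpos : ∀ l j, 0 ≤ ⟪ν l, ω j⟫)
    (p : Fin d → ℝ) (hp : ∀ j, 0 ≤ p j) (hp1 : (∑ j, p j) = 1)
    (q : Fin N → ℝ) (hq : ∀ l, q l = c l * ⟪ν l, (∑ j, p j • ω j)⟫) :
    (-∑ l, q l * Real.log (q l)) ≥ -∑ j, p j * Real.log (p j) := by
  set M : Fin N → Fin d → ℝ := fun l j => c l * ⟪ν l, ω j⟫ with hM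
  have hM0 : ∀ l j, 0 ≤ M l j := fun l j => mul_nonneg (hc0 l) (hpos l j)
  -- columns sum to 1
  have col : ∀ j, (∑ l, M l j) = 1 := by
    intro j
    have h1 : ⟪∑ l, c l • ν l, ω j⟫ = 1 := by rw [hcsum]; exact hωn j
    rw [sum_inner] at h1
    simp only [real_inner_smul_left] at h1
    exact h1
  -- rows sum to c l
  have row : ∀ l, (∑ j, M l j) = c l := by
    intro l
    have h1 : ⟪ν l, ∑ j, ω j⟫ = 1 := by rw [hωsum, real_inner_comm]; exact hνn l
    rw [inner_sum] at h1
    calc (∑ j, M l j) = c l * ∑ j, ⟪ν l, ω j⟫ := by rw [Finset.mul_sum]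
      _ = c l * 1 := by rw [h1]
      _ = c l := mul_one _
  -- q = M p
  have hq' : ∀ l, q l = ∑ j, M l j * p j := by
    intro l
    rw [hq l, inner_sum]
    simp only [real_inner_smul_right, Finset.mul_sum, hM]
    exact Finset.sum_congr rfl fun j _ => by ring
  have hq0 : ∀ l, 0 ≤ q l := fun l => by
    rw [hq' l]; exact Finset.sum_nonneg fun j _ => mul_nonneg (hM0 l j) (hp j)
  -- key termwise inequality
  have key : ∀ l j, M l j * p j * Real.log (q l) ≤
      M l j * (p j * Real.log (p j)) + M l j * (q l - p j) := by
    intro l j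
    rcases eq_or_lt_of_le (hM0 l j) with h | h
    · simp [← h]
    · rcases eq_or_lt_of_le (hp j) with hpj | hpj
      · simp only [← hpj, mul_zero, zero_mul, Real.log_zero, sub_zero, zero_add]
        exact mul_nonneg h.le (hq0 l)
      · have hql : 0 < q l := by
          rw [hq' l]
          exact lt_of_lt_of_le (mul_pos h hpj)
            (Finset.single_le_sum (fun i _ => mul_nonneg (hM0 l i) (hp i))
              (Finset.mem_univ j))
        have hlog : Real.log (q l) - Real.log (p j) ≤ q l / p j - 1 := by
          have h2 := Real.log_le_sub_one_of_pos (div_pos hql hpj)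
          rwa [Real.log_div hql.ne' hpj.ne'] at h2
        have h2 : p j * (Real.log (q l) - Real.log (p j)) ≤ q l - p j := by
          calc p j * (Real.log (q l) - Real.log (p j))
              ≤ p j * (q l / p j - 1) := mul_le_mul_of_nonneg_left hlog hpj.le
            _ = q l - p j := by field_simp
        nlinarith [mul_le_mul_of_nonneg_left h2 h.le]
  rw [ge_iff_le, neg_le_neg_iff]
  calc (∑ l, q l * Real.log (q l))
      = ∑ l, ∑ j, M l j * p j * Real.log (q l) := by
        refine Finset.sum_congr rfl fun l _ => ?_
        nth_rewrite 1 [hq' l]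
        rw [Finset.sum_mul]
    _ ≤ ∑ l, ∑ j, (M l j * (p j * Real.log (p j)) + M l j * (q l - p j)) :=
        Finset.sum_le_sum fun l _ =>
          Finset.sum_le_sum fun j _ => key l j
    _ = (∑ l, ∑ j, M l j * (p j * Real.log (p j)))
        + ∑ l, ∑ j, M l j * (q l - p j) := by
        simp [Finset.sum_add_distrib]
    _ ≤ (∑ j, p j * Real.log (p j)) + 0 := by
        gcongr ?_ + ?_
        · rw [Finset.sum_comm]
          apply le_of_eq
          refine Finset.sum_congr rfl fun j _ => ?_
          rw [← Finset.sum_mul, col j, one_mul]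
        · apply Finset.sum_nonpos
          intro l _
          have : (∑ j, M l j * (q l - p j)) = (c l - 1) * q l := by
            simp only [mul_sub]
            rw [Finset.sum_sub_distrib, ← Finset.sum_mul, row l, ← hq' l]
            ring
          rw [this]
          exact mul_nonpos_of_nonpos_of_nonneg (by linarith [hc1 l]) (hq0 l)
    _ = ∑ j, p j * Real.log (p j) := add_zero _
end

section
/- Measurement Rényi entropy dominates spectral Rényi entropy (Theorem 7, spectral form, Rényi case). Let V be a real inner product space, u ∈ V, and d, N ∈ ℕ. Let (ω_j)_{j ∈ Fin d} satisfy ∑ j, ω_j = u and ⟪u, ω_j⟫ = 1 for all j. Let (ν_l)_{l ∈ Fin N} and c : Fin N → ℝ satisfy 0 ≤ c l ≤ 1, ⟪u, ν_l⟫ = 1, ∑ l, c l • ν_l = u, and ⟪ν_l, ω_j⟫ ≥ 0 for all l, j. Let p be a probability vector on Fin d with d ≥ 1, set ω := ∑ j, p j • ω_j and q l := c l · ⟪ν_l, ω⟫. Then for every real α with 0 < α and α ≠ 1: (1/(1−α)) · log (∑ l, (q l)^α) ≥ (1/(1−α)) · log (∑ j, (p j)^α), where x^α denotes the real power Real.rpow.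 -/
open scoped RealInnerProductSpace

open Finset in
/-- Concave Jensen for `rpow` with exponent in `(0,1]`. -/
lemma sum_rpow_le_rpow_sum_aux {ι : Type*} (s : Finset ι) (w z : ι → ℝ)
    (hw : ∀ i ∈ s, 0 ≤ w i) (hw' : ∑ i ∈ s, w i = 1)
    (hz : ∀ i ∈ s, 0 ≤ z i) {α : ℝ} (hα0 : 0 < α) (hα1 : α ≤ 1) :
    ∑ i ∈ s, w i * z i ^ α ≤ (∑ i ∈ s, w i * z i) ^ α := by
  have hα' : (1 : ℝ) ≤ 1 / α := (le_div_iff₀ hα0).2 (by linarith)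
  have h := Real.rpow_arith_mean_le_arith_mean_rpow s w (fun i => z i ^ α) hw hw'
    (fun i hi => Real.rpow_nonneg (hz i hi) α) hα'
  have hsimp : ∑ i ∈ s, w i * (z i ^ α) ^ (1 / α) = ∑ i ∈ s, w i * z i := by
    refine Finset.sum_congr rfl fun i hi => ?_
    rw [← Real.rpow_mul (hz i hi), mul_one_div_cancel hα0.ne', Real.rpow_one]
  rw [hsimp] at h
  have hS : 0 ≤ ∑ i ∈ s, w i * z i ^ α :=
    Finset.sum_nonneg fun i hi => mul_nonneg (hw i hi) (Real.rpow_nonneg (hz i hi) α)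
  calc ∑ i ∈ s, w i * z i ^ α
      = ((∑ i ∈ s, w i * z i ^ α) ^ (1 / α)) ^ α := by
        rw [← Real.rpow_mul hS, one_div_mul_cancel hα0.ne', Real.rpow_one]
    _ ≤ (∑ i ∈ s, w i * z i) ^ α :=
        Real.rpow_le_rpow (Real.rpow_nonneg hS _) h hα0.le

/-- Measurement Rényi entropy dominates spectral Rényi entropy (Theorem 7,
spectral form, Rényi case): for every `α ∈ (0,∞) \ {1}`, the order-α Rényi
entropy of the outcome probabilities of any fine-grained measurement on a
state is at least the order-α spectral Rényi entropy of the state. -/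
theorem measurement_renyi_entropy_ge_spectral_renyi_entropy
    {V : Type*} [NormedAddCommGroup V] [InnerProductSpace ℝ V]
    (u : V) (d N : ℕ) (ω : Fin d → V)
    (hωsum : (∑ j, ω j) = u) (hωn : ∀ j, ⟪u, ω j⟫ = 1)
    (ν : Fin N → V) (c : Fin N → ℝ)
    (hc0 : ∀ l, 0 ≤ c l) (hc1 : ∀ l, c l ≤ 1)
    (hνn : ∀ l, ⟪u, ν l⟫ = 1)
    (hcsum : (∑ l, c l • ν l) = u)
    (hpos : ∀ l j, 0 ≤ ⟪ν l, ω j⟫)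
    (hd : 1 ≤ d)
    (p : Fin d → ℝ) (hp : ∀ j, 0 ≤ p j) (hp1 : (∑ j, p j) = 1)
    (q : Fin N → ℝ) (hq : ∀ l, q l = c l * ⟪ν l, (∑ j, p j • ω j)⟫) :
    ∀ α : ℝ, 0 < α → α ≠ 1 →
      (1 / (1 - α)) * Real.log (∑ l, Real.rpow (q l) α)
        ≥ (1 / (1 - α)) * Real.log (∑ j, Real.rpow (p j) α) := by
  intro α hα0 hα1
  -- notation: a l j = ⟪ν l, ω j⟫
  set a : Fin N → Fin d → ℝ := fun l j => ⟪ν l, ω j⟫ with ha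
  have ha0 : ∀ l j, 0 ≤ a l j := hpos
  -- row sums of a are 1
  have harow : ∀ l, ∑ j, a l j = 1 := by
    intro l
    have : ∑ j, ⟪ν l, ω j⟫ = ⟪ν l, ∑ j, ω j⟫ := (inner_sum _ _ _).symm
    rw [ha]; rw [this, hωsum, real_inner_comm, hνn]
  -- column sums of c l * a l j are 1
  have hacol : ∀ j, ∑ l, c l * a l j = 1 := by
    intro j
    have : ∑ l, ⟪c l • ν l, ω j⟫ = ⟪∑ l, c l • ν l, ω j⟫ := (sum_inner _ _ _).symm
    simp only [real_inner_smul_left] at this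
    rw [ha]
    simpa [hcsum, hωn j] using this
  -- rewrite q
  have hq' : ∀ l, q l = c l * ∑ j, a l j * p j := by
    intro l
    rw [hq l, inner_sum]
    simp only [real_inner_smul_right]
    congr 1
    exact Finset.sum_congr rfl fun j _ => mul_comm _ _
  have hq0 : ∀ l, 0 ≤ q l := by
    intro l
    rw [hq' l]
    exact mul_nonneg (hc0 l) (Finset.sum_nonneg fun j _ =>
      mul_nonneg (ha0 l j) (hp j))
  -- positivity of ∑ p^α
  have hppos : 0 < ∑ j, (p j) ^ α := by
    obtain ⟨j, -, hj⟩ : ∃ j ∈ Finset.univ, 0 < p j := by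
      by_contra h
      push_neg at h
      have : ∑ j, p j ≤ 0 := Finset.sum_nonpos fun j hj => h j hj
      linarith [hp1 ▸ this]
    have h1 : (0:ℝ) < (p j) ^ α := Real.rpow_pos_of_pos hj α
    have h2 : (p j) ^ α ≤ ∑ j, (p j) ^ α :=
      Finset.single_le_sum (fun i _ => Real.rpow_nonneg (hp i) α) (Finset.mem_univ j)
    linarith
  -- the inner double sum
  have hdouble : ∑ l, c l * ∑ j, a l j * (p j) ^ α = ∑ j, (p j) ^ α := by
    calc ∑ l, c l * ∑ j, a l j * (p j) ^ α
        = ∑ l, ∑ j, (c l * a l j) * (p j) ^ α := by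
          refine Finset.sum_congr rfl fun l _ => ?_
          rw [Finset.mul_sum]; exact Finset.sum_congr rfl fun j _ => by ring
      _ = ∑ j, ∑ l, (c l * a l j) * (p j) ^ α := Finset.sum_comm
      _ = ∑ j, (p j) ^ α := by
          refine Finset.sum_congr rfl fun j _ => ?_
          rw [← Finset.sum_mul, hacol j, one_mul]
  rcases lt_or_gt_of_ne hα1 with hlt | hgt
  · -- case α < 1 : ∑ q^α ≥ ∑ p^α
    have key : ∑ j, (p j) ^ α ≤ ∑ l, (q l) ^ α := by
      calc ∑ j, (p j) ^ α = ∑ l, c l * ∑ j, a l j * (p j) ^ α := hdouble.symm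
        _ ≤ ∑ l, (q l) ^ α := by
            refine Finset.sum_le_sum fun l _ => ?_
            have hjen : ∑ j, a l j * (p j) ^ α ≤ (∑ j, a l j * p j) ^ α :=
              sum_rpow_le_rpow_sum_aux Finset.univ (a l) p (fun j _ => ha0 l j)
                (harow l) (fun j _ => hp j) hα0 hlt.le
            have hc : c l ≤ (c l) ^ α := by
              rcases eq_or_lt_of_le (hc0 l) with h | h
              · rw [← h]; exact Real.rpow_nonneg le_rfl α
              · calc c l = (c l) ^ (1:ℝ) := (Real.rpow_one _).symm
                  _ ≤ (c l) ^ α := Real.rpow_le_rpow_of_exponent_ge h (hc1 l) hlt.le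
            have hS0 : 0 ≤ ∑ j, a l j * (p j) ^ α :=
              Finset.sum_nonneg fun j _ =>
                mul_nonneg (ha0 l j) (Real.rpow_nonneg (hp j) α)
            calc c l * ∑ j, a l j * (p j) ^ α
                ≤ (c l) ^ α * (∑ j, a l j * p j) ^ α :=
                  mul_le_mul hc hjen hS0 (Real.rpow_nonneg (hc0 l) α)
              _ = (q l) ^ α := by
                  rw [← Real.mul_rpow (hc0 l) (Finset.sum_nonneg fun j _ =>
                    mul_nonneg (ha0 l j) (hp j)), ← hq' l]
    have h1α : 0 < 1 - α := by linarith
    have hlog : Real.log (∑ j, (p j) ^ α) ≤ Real.log (∑ l, (q l) ^ α) :=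
      Real.log_le_log hppos key
    exact mul_le_mul_of_nonneg_left hlog (by positivity)
  · -- case α > 1 : ∑ q^α ≤ ∑ p^α
    have key : ∑ l, (q l) ^ α ≤ ∑ j, (p j) ^ α := by
      calc ∑ l, (q l) ^ α
          ≤ ∑ l, c l * ∑ j, a l j * (p j) ^ α := by
            refine Finset.sum_le_sum fun l _ => ?_
            have hjen : (∑ j, a l j * p j) ^ α ≤ ∑ j, a l j * (p j) ^ α :=
              Real.rpow_arith_mean_le_arith_mean_rpow Finset.univ (a l) p
                (fun j _ => ha0 l j) (harow l) (fun j _ => hp j) hgt.le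
            have hc : (c l) ^ α ≤ c l := by
              rcases eq_or_lt_of_le (hc0 l) with h | h
              · rw [← h, Real.zero_rpow hα0.ne']
              · calc (c l) ^ α ≤ (c l) ^ (1:ℝ) :=
                    Real.rpow_le_rpow_of_exponent_ge h (hc1 l) hgt.le
                  _ = c l := Real.rpow_one _
            calc (q l) ^ α
                = (c l) ^ α * (∑ j, a l j * p j) ^ α := by
                  rw [← Real.mul_rpow (hc0 l) (Finset.sum_nonneg fun j _ =>
                    mul_nonneg (ha0 l j) (hp j)), ← hq' l]
              _ ≤ c l * ∑ j, a l j * (p j) ^ α :=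
                  mul_le_mul hc hjen (Real.rpow_nonneg (Finset.sum_nonneg fun j _ =>
                    mul_nonneg (ha0 l j) (hp j)) α) (hc0 l)
        _ = ∑ j, (p j) ^ α := hdouble
    -- positivity of ∑ q^α : since ∑ q = 1
    have hqsum : ∑ l, q l = 1 := by
      have : ∑ l, q l = ∑ l, ∑ j, (c l * a l j) * p j := by
        refine Finset.sum_congr rfl fun l _ => ?_
        rw [hq' l, Finset.mul_sum]
        exact Finset.sum_congr rfl fun j _ => by ring
      rw [this, Finset.sum_comm]
      calc ∑ j, ∑ l, (c l * a l j) * p j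
          = ∑ j, p j := by
            refine Finset.sum_congr rfl fun j _ => ?_
            rw [← Finset.sum_mul, hacol j, one_mul]
        _ = 1 := hp1
    have hqpos : 0 < ∑ l, (q l) ^ α := by
      obtain ⟨l, -, hl⟩ : ∃ l ∈ Finset.univ, 0 < q l := by
        by_contra h
        push_neg at h
        have : ∑ l, q l ≤ 0 := Finset.sum_nonpos fun l hl => h l hl
        linarith [hqsum ▸ this]
      have h1 : (0:ℝ) < (q l) ^ α := Real.rpow_pos_of_pos hl α
      have h2 : (q l) ^ α ≤ ∑ l, (q l) ^ α :=
        Finset.single_le_sum (fun i _ => Real.rpow_nonneg (hq0 i) α) (Finset.mem_univ l)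
      linarith
    have hlog : Real.log (∑ l, (q l) ^ α) ≤ Real.log (∑ j, (p j) ^ α) :=
      Real.log_le_log hqpos key
    have h1α : 1 / (1 - α) ≤ 0 := by
      apply div_nonpos_of_nonneg_of_nonpos <;> linarith
    exact mul_le_mul_of_nonpos_left hlog h1α
end

section
/- Decomposition Rényi-2 entropy equals spectral Rényi-2 entropy (core of Theorem 8, α = 2 case). Let V be a real inner product space and d, n ∈ ℕ. Let (ω_j)_{j ∈ Fin d} be an orthonormal family and (φ_k)_{k ∈ Fin n} a family of unit vectors (⟪φ_k, φ_k⟫ = 1) with ⟪φ_j, φ_k⟫ ≥ 0 for all j, k. Let p be a probability vector on Fin d and q a probability vector on Fin n with ∑ j, p j • ω_j = ∑ k, q k • φ_k. Then ∑ k, (q k)² ≤ ∑ j, (p j)². (Hence H₂(q) ≥ H₂(p), so the Rényi-2 entropy of any convex decomposition of a state into pure states is at least the spectral Rényi-2 entropy; this yields Š₂ = S₂.) -/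
open scoped RealInnerProductSpace

/-- Decomposition Rényi-2 entropy equals spectral Rényi-2 entropy (core of
Theorem 8, α = 2 case): the coefficients of any decomposition of a state into
pure states have `∑ (q k)² ≤ ∑ (p j)²` where `p` are the spectral
coefficients; hence `H₂(q) ≥ H₂(p)` and `Š₂ = S₂`. -/
theorem decomposition_renyi2_ge_spectral
    {V : Type*} [NormedAddCommGroup V] [InnerProductSpace ℝ V]
    (d n : ℕ) (ω : Fin d → V) (φ : Fin n → V)
    (hω : Orthonormal ℝ ω)
    (hφunit : ∀ k, ⟪φ k, φ k⟫ = 1)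
    (hφpos : ∀ j k, 0 ≤ ⟪φ j, φ k⟫)
    (p : Fin d → ℝ) (hp : ∀ j, 0 ≤ p j) (hp1 : (∑ j, p j) = 1)
    (q : Fin n → ℝ) (hq : ∀ k, 0 ≤ q k) (hq1 : (∑ k, q k) = 1)
    (hpq : (∑ j, p j • ω j) = ∑ k, q k • φ k) :
    (∑ k, (q k) ^ 2) ≤ ∑ j, (p j) ^ 2 := by
  have key : ⟪∑ j, p j • ω j, ∑ j, p j • ω j⟫ = ∑ j, (p j) ^ 2 := by
    rw [inner_sum]
    refine Finset.sum_congr rfl fun j _ => ?_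
    rw [sum_inner]
    rw [Finset.sum_eq_single j]
    · simp [real_inner_smul_left, real_inner_smul_right, orthonormal_iff_ite.mp hω, sq, norm_smul, hω.1 j]
    · intro i _ hij
      simp [real_inner_smul_left, real_inner_smul_right, hω.2 hij]
    · simp
  have key2 : ∑ k, (q k) ^ 2 ≤ ⟪∑ k, q k • φ k, ∑ k, q k • φ k⟫ := by
    rw [inner_sum]
    apply Finset.sum_le_sum
    intro k _
    rw [sum_inner]
    rw [show (q k)^2 = ∑ l ∈ {k}, ⟪q l • φ l, q k • φ k⟫ by
      simp [real_inner_smul_left, real_inner_smul_right, hφunit k, sq,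
        (by rw [← real_inner_self_eq_norm_mul_norm]; exact hφunit k : ‖φ k‖ * ‖φ k‖ = 1)]]
    apply Finset.sum_le_sum_of_subset_of_nonneg (by simp)
    intro l _ _
    simp only [real_inner_smul_left, real_inner_smul_right]
    exact mul_nonneg (hq k) (mul_nonneg (hq l) (hφpos l k))
  calc ∑ k, (q k) ^ 2 ≤ ⟪∑ k, q k • φ k, ∑ k, q k • φ k⟫ := key2
    _ = ∑ j, (p j) ^ 2 := by rw [← hpq, key]
end

section
/- Decomposition min-entropy equals spectral min-entropy (core of Theorem 8, α = ∞ case). Let V be a real inner product space and d, n ∈ ℕ with d ≥ 1 and n ≥ 1. Let (ω_j)_{j ∈ Fin d} be a family in V, set u := ∑ j, ω_j, and let (φ_k)_{k ∈ Fin n} be a family of unit vectors (⟪φ_k, φ_k⟫ = 1) satisfying ⟪φ_l, φ_k⟫ ≥ 0 for all l, k, and, for all j, k: 0 ≤ ⟪ω_j, φ_k⟫ ≤ 1 and ⟪u, φ_k⟫ = 1. Let p be a probability vector on Fin d and q a probability vector on Fin n with ∑ j, p j • ω_j = ∑ k, q k • φ_k. Then max_k q k ≤ max_j p j. (Hence H_∞(q)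 ≥ H_∞(p), so the min-entropy of any convex decomposition of a state into pure states is at least the spectral min-entropy; this yields Š_∞ = S_∞.) -/
open scoped RealInnerProductSpace

/-- Decomposition min-entropy equals spectral min-entropy (core of Theorem 8,
α = ∞ case): the largest coefficient of any decomposition of a state into pure
states is at most the largest spectral coefficient, hence `H_∞(q) ≥ H_∞(p)`
and `Š_∞ = S_∞`. -/
theorem decomposition_min_entropy_ge_spectral
    {V : Type*} [NormedAddCommGroup V] [InnerProductSpace ℝ V]
    (d n : ℕ) (hd : 1 ≤ d) (hn : 1 ≤ n)
    (ω : Fin d → V) (u : V) (hu : u = ∑ j, ω j)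
    (φ : Fin n → V)
    (hφunit : ∀ k, ⟪φ k, φ k⟫ = 1)
    (hφpos : ∀ l k, 0 ≤ ⟪φ l, φ k⟫)
    (hωφ0 : ∀ j k, 0 ≤ ⟪ω j, φ k⟫) (hωφ1 : ∀ j k, ⟪ω j, φ k⟫ ≤ 1)
    (huφ : ∀ k, ⟪u, φ k⟫ = 1)
    (p : Fin d → ℝ) (hp : ∀ j, 0 ≤ p j) (hp1 : (∑ j, p j) = 1)
    (q : Fin n → ℝ) (hq : ∀ k, 0 ≤ q k) (hq1 : (∑ k, q k) = 1)
    (hpq : (∑ j, p j • ω j) = ∑ k, q k • φ k) :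
    Finset.univ.sup' (Finset.univ_nonempty_iff.mpr ⟨⟨0, hn⟩⟩) q
      ≤ Finset.univ.sup' (Finset.univ_nonempty_iff.mpr ⟨⟨0, hd⟩⟩) p := by
  set M := Finset.univ.sup' (Finset.univ_nonempty_iff.mpr ⟨⟨0, hd⟩⟩) p with hM
  apply Finset.sup'_le
  intro k _
  have hMle : ∀ j, p j ≤ M := fun j => Finset.le_sup' p (Finset.mem_univ j)
  have h1 : q k ≤ ⟪∑ j, p j • ω j, φ k⟫ := by
    rw [hpq, sum_inner]
    have : q k = q k * ⟪φ k, φ k⟫ := by rw [hφunit k]; ring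
    calc q k = q k * ⟪φ k, φ k⟫ := this
    _ = ⟪q k • φ k, φ k⟫ := by rw [real_inner_smul_left]
    _ ≤ ∑ l, ⟪q l • φ l, φ k⟫ := by
        apply Finset.single_le_sum (f := fun l => ⟪q l • φ l, φ k⟫)
        · intro l _
          rw [real_inner_smul_left]
          exact mul_nonneg (hq l) (hφpos l k)
        · exact Finset.mem_univ k
  have h2 : ⟪∑ j, p j • ω j, φ k⟫ ≤ M := by
    rw [sum_inner]
    have hsum : ∑ j, ⟪ω j, φ k⟫ = 1 := by
      rw [← huφ k, hu, sum_inner]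
    calc ∑ j, ⟪p j • ω j, φ k⟫ = ∑ j, p j * ⟪ω j, φ k⟫ := by
          simp [real_inner_smul_left]
    _ ≤ ∑ j, M * ⟪ω j, φ k⟫ := by
          apply Finset.sum_le_sum
          intro j _
          exact mul_le_mul_of_nonneg_right (hMle j) (hωφ0 j k)
    _ = M * ∑ j, ⟪ω j, φ k⟫ := by rw [Finset.mul_sum]
    _ = M := by rw [hsum, mul_one]
  linarith
end

section
/- The gbit admits no consistent thermodynamic entropy. Let Ω := {v : Fin 3 → ℝ | v 0 = 1 ∧ 0 ≤ v 1 ∧ v 1 ≤ 1 ∧ 0 ≤ v 2 ∧ v 2 ≤ 1} (the square/gbit state space), and call ω, ω' ∈ Ω perfectly distinguishable if there exists a linear map e : (Fin 3 → ℝ) →ₗ[ℝ] ℝ with 0 ≤ e σ ≤ 1 for all σ ∈ Ω, e ω = 1 and e ω' = 0. Then there is no function H : (Fin 3 → ℝ) → ℝ such that for all perfectly distinguishable ω, ω' ∈ Ω and all p with 0 < p < 1: H (p • ω + (1 − p) • ω') = p · H ω + (1 − p) · H ω' − p · log p − (1 − p) · log (1 − p). -/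
/-- The gbit (square) state space: vectors `v : Fin 3 → ℝ` with `v 0 = 1`
(normalization) and fiducial probabilities `v 1, v 2 ∈ [0,1]`. -/
def gbitStates : Set (Fin 3 → ℝ) :=
  {v | v 0 = 1 ∧ 0 ≤ v 1 ∧ v 1 ≤ 1 ∧ 0 ≤ v 2 ∧ v 2 ≤ 1}

/-- Two gbit states are perfectly distinguishable if some effect (a linear
functional taking values in `[0,1]` on all states) is `1` on the first and
`0` on the second. -/
def gbitPerfectlyDistinguishable (ω ω' : Fin 3 → ℝ) : Prop :=
  ∃ e : (Fin 3 → ℝ) →ₗ[ℝ] ℝ,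
    (∀ σ ∈ gbitStates, 0 ≤ e σ ∧ e σ ≤ 1) ∧ e ω = 1 ∧ e ω' = 0

lemma gbit_mem (x y : ℝ) (hx0 : 0 ≤ x) (hx1 : x ≤ 1) (hy0 : 0 ≤ y) (hy1 : y ≤ 1) :
    (![1, x, y] : Fin 3 → ℝ) ∈ gbitStates := by
  refine ⟨by simp, by simpa using hx0, by simpa using hx1, by simpa using hy0,
    by simpa using hy1⟩

lemma gbit_dist1 (x y : ℝ) :
    gbitPerfectlyDistinguishable ![1, 1, x] ![1, 0, y] := by
  refine ⟨LinearMap.proj 1, fun σ hσ => ⟨hσ.2.1, hσ.2.2.1⟩, by simp, by simp⟩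

lemma gbit_dist2 (x y : ℝ) :
    gbitPerfectlyDistinguishable ![1, x, 1] ![1, y, 0] := by
  refine ⟨LinearMap.proj 2, fun σ hσ => ⟨hσ.2.2.2.1, hσ.2.2.2.2⟩, by simp, by simp⟩

/-- The gbit admits no consistent thermodynamic entropy: no function `H` on
states satisfies Petz's mixing rule for all decompositions into perfectly
distinguishable states. -/
theorem gbit_admits_no_entropy :
    ¬ ∃ H : (Fin 3 → ℝ) → ℝ,
      ∀ ω ∈ gbitStates, ∀ ω' ∈ gbitStates,
        gbitPerfectlyDistinguishable ω ω' →
          ∀ p : ℝ, 0 < p → p < 1 →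
            H (p • ω + (1 - p) • ω')
              = p * H ω + (1 - p) * H ω'
                - p * Real.log p - (1 - p) * Real.log (1 - p) := by
  rintro ⟨H, hH⟩
  have half : (1 : ℝ) - 1/2 = 1/2 := by norm_num
  have mix : ∀ x1 y1 x2 y2 : ℝ,
      (1/2 : ℝ) • (![1, x1, y1] : Fin 3 → ℝ) + ((1:ℝ) - 1/2) • ![1, x2, y2]
        = ![1, (x1 + x2)/2, (y1 + y2)/2] := by
    intro x1 y1 x2 y2
    funext i
    fin_cases i <;> simp [Pi.add_apply, Pi.smul_apply, smul_eq_mul] <;> ring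
  -- corner states
  have ha := gbit_mem 0 0 le_rfl zero_le_one le_rfl zero_le_one
  have hb := gbit_mem 1 0 zero_le_one le_rfl le_rfl zero_le_one
  have hc := gbit_mem 0 1 le_rfl zero_le_one zero_le_one le_rfl
  have hd := gbit_mem 1 1 zero_le_one le_rfl zero_le_one le_rfl
  have hm0 := gbit_mem (1/2) 0 (by norm_num) (by norm_num) le_rfl zero_le_one
  have hm1 := gbit_mem (1/2) 1 (by norm_num) (by norm_num) zero_le_one le_rfl
  -- the five mixing equations
  have e1 := hH _ hb _ ha (gbit_dist1 0 0) (1/2) (by norm_num) (by norm_num)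
  have e2 := hH _ hd _ hc (gbit_dist1 1 1) (1/2) (by norm_num) (by norm_num)
  have e3 := hH _ hm1 _ hm0 (gbit_dist2 (1/2) (1/2)) (1/2) (by norm_num) (by norm_num)
  have e4 := hH _ hd _ ha (gbit_dist1 1 0) (1/2) (by norm_num) (by norm_num)
  have e5 := hH _ hb _ hc (gbit_dist1 0 1) (1/2) (by norm_num) (by norm_num)
  rw [mix] at e1 e2 e3 e4 e5
  norm_num at e1 e2 e3 e4 e5
  have hlog : Real.log (1/2) ≠ 0 := by
    have : Real.log (1/2) < 0 := Real.log_neg (by norm_num) (by norm_num)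
    linarith
  -- combine: e3 with e1,e2 says H(center) = ¼Σ + 2·(-log½);
  -- e4+e5 say 2·H(center) = ½Σ + 2·(-log½). Contradiction.
  have : Real.log (1/2) = 0 := by linarith
  exact hlog this
end

section
/- Classical core of Klein's inequality. Let d ∈ ℕ, let p and q be probability vectors on Fin d with q k > 0 for all k, and let P : Matrix (Fin d) (Fin d) ℝ have nonnegative entries with every row summing to 1 and every column summing to 1 (P is doubly stochastic). Then ∑ j, p j · log (p j) − ∑ j, ∑ k, p j · P j k · log (q k) ≥ 0. -/
/-- Classical core of Klein's inequality: for probability vectors `p`, `q`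
with `q` strictly positive, and a doubly stochastic matrix `P`,
`∑ j, p j · log (p j) − ∑ j ∑ k, p j · P j k · log (q k) ≥ 0`. -/
theorem classical_klein_inequality
    (d : ℕ) (p q : Fin d → ℝ)
    (hp : ∀ j, 0 ≤ p j) (hp1 : (∑ j, p j) = 1)
    (hq : ∀ k, 0 < q k) (hq1 : (∑ k, q k) = 1)
    (P : Matrix (Fin d) (Fin d) ℝ)
    (hP : ∀ j k, 0 ≤ P j k)
    (hrow : ∀ j, (∑ k, P j k) = 1)
    (hcol : ∀ k, (∑ j, P j k) = 1) :
    (∑ j, p j * Real.log (p j))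
      - (∑ j, ∑ k, p j * P j k * Real.log (q k)) ≥ 0 := by
  have key : ∀ j k, p j * P j k - P j k * q k ≤
      p j * P j k * Real.log (p j) - p j * P j k * Real.log (q k) := by
    intro j k
    rcases eq_or_lt_of_le (hp j) with h | h
    · rw [← h]
      simp
      nlinarith [mul_nonneg (hP j k) (hq k).le]
    · have hlog := Real.log_le_sub_one_of_pos (div_pos (hq k) h)
      rw [Real.log_div (hq k).ne' h.ne'] at hlog
      have h1 : p j * (Real.log (q k) - Real.log (p j)) ≤ q k - p j := by
        have := mul_le_mul_of_nonneg_left hlog h.le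
        calc p j * (Real.log (q k) - Real.log (p j))
            ≤ p j * (q k / p j - 1) := this
          _ = q k - p j := by field_simp
      nlinarith [mul_le_mul_of_nonneg_left h1 (hP j k)]
  have e1 : (∑ j, p j * Real.log (p j)) =
      ∑ j, ∑ k, p j * P j k * Real.log (p j) := by
    refine Finset.sum_congr rfl fun j _ => ?_
    have : (∑ k, p j * P j k * Real.log (p j)) =
        (∑ k, P j k) * (p j * Real.log (p j)) := by
      rw [Finset.sum_mul]; exact Finset.sum_congr rfl fun k _ => by ring
    rw [this, hrow j, one_mul]
  have lower : (0:ℝ) = ∑ j, ∑ k, (p j * P j k - P j k * q k) := by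
    have hA : (∑ j, ∑ k, p j * P j k) = 1 := by
      simp_rw [← Finset.mul_sum, hrow, mul_one, hp1]
    have hB : (∑ j, ∑ k, P j k * q k) = 1 := by
      rw [Finset.sum_comm]
      simp_rw [← Finset.sum_mul, hcol, one_mul, hq1]
    simp_rw [Finset.sum_sub_distrib, hA, hB, sub_self]
  have step : (0:ℝ) ≤ ∑ j, ∑ k,
      (p j * P j k * Real.log (p j) - p j * P j k * Real.log (q k)) :=
    lower ▸ Finset.sum_le_sum (fun j _ => Finset.sum_le_sum fun k _ => key j k)
  rw [e1, ge_iff_le, sub_nonneg]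
  simpa [Finset.sum_sub_distrib, sub_nonneg] using step
end

section
/- Mutual orthogonality of the projectors of an instrument (appendix Lemma 'ProjectorsOrthogonal'). Let V be a finite-dimensional real vector space, C ⊆ V a convex cone whose linear span is all of V, and u : V →ₗ[ℝ] ℝ a linear functional with u x > 0 for every x ∈ C with x ≠ 0. Let P_1, …, P_n : V →ₗ[ℝ] V be linear maps such that P_j ∘ P_j = P_j and P_j '' C ⊆ C for every j, and ∑ j, u (P_j x) = u x for all x ∈ V. Then P_k ∘ P_j = 0 for all j ≠ k. -/
/-- Mutual orthogonality of the projectors of an instrument (appendix Lemma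
'ProjectorsOrthogonal'): idempotent positive maps whose induced effects sum to
the (strictly positive on the spanning cone) normalization functional are
mutually orthogonal. -/
theorem instrument_projectors_orthogonal
    {V : Type*} [AddCommGroup V] [Module ℝ V] [FiniteDimensional ℝ V]
    (C : Set V) (hconv : Convex ℝ C)
    (hcone : ∀ (r : ℝ), 0 < r → ∀ x ∈ C, r • x ∈ C)
    (hspan : Submodule.span ℝ C = ⊤)
    (u : V →ₗ[ℝ] ℝ) (hu : ∀ x ∈ C, x ≠ 0 → 0 < u x)
    (n : ℕ) (P : Fin n → V →ₗ[ℝ] V)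
    (hidem : ∀ j, (P j) ∘ₗ (P j) = P j)
    (hposmap : ∀ j, ∀ x ∈ C, P j x ∈ C)
    (hnorm : ∀ x : V, (∑ j, u (P j x)) = u x) :
    ∀ j k, j ≠ k → (P k) ∘ₗ (P j) = 0 := by
  have hnn : ∀ x ∈ C, 0 ≤ u x := by
    intro x hx
    by_cases h : x = 0
    · simp [h]
    · exact (hu x hx h).le
  intro j k hjk
  apply LinearMap.ext_on hspan
  intro x hx
  set y := P j x with hy
  have hyC : y ∈ C := hposmap j x hx
  have hfix : P j y = y := by
    have := congrArg (fun f : V →ₗ[ℝ] V => f x) (hidem j)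
    simpa using this
  -- sum over i ≠ j of u (P i y) is zero
  have hsum : ∑ i, u (P i y) = u y := hnorm y
  have hsplit : u (P j y) + ∑ i ∈ Finset.univ.erase j, u (P i y) = u y := by
    have := Finset.add_sum_erase Finset.univ (fun i => u (P i y)) (Finset.mem_univ j)
    rw [this]; exact hsum
  have hzero : ∑ i ∈ Finset.univ.erase j, u (P i y) = 0 := by
    rw [hfix] at hsplit; linarith
  have hterm : u (P k y) = 0 := by
    have := (Finset.sum_eq_zero_iff_of_nonneg
      (fun i _ => hnn _ (hposmap i y hyC))).mp hzero
    exact this k (Finset.mem_erase.mpr ⟨hjk.symm, Finset.mem_univ k⟩)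
  have : P k y = 0 := by
    by_contra h
    exact absurd hterm (ne_of_gt (hu _ (hposmap k y hyC) h))
  simpa using this
end

section
/- A positive projection onto the span of a face maps the cone into the face (appendix lemma). Let V be a real vector space, C ⊆ V a convex cone with C ∩ (−C) ⊆ {0} (pointed), and F ⊆ C a nonempty convex extreme subset of C (IsExtreme ℝ C F) with 0 ∈ F. Let P : V →ₗ[ℝ] V be a linear map such that P '' C ⊆ C, P x = x for every x ∈ Submodule.span ℝ F, and the range of P is contained in Submodule.span ℝ F. Then P ω ∈ F for every ω ∈ C. (In particular, F = Submodule.span ℝ F ∩ C.) -/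
/-- A positive projection onto the span of a face maps the cone into the face
(appendix lemma): if `C` is a pointed convex cone, `F` a nonempty convex
extreme subset of `C` containing `0`, and `P` a linear map preserving `C`,
fixing `span F`, and with range contained in `span F`, then `P` maps `C`
into `F`. -/
theorem positive_projection_maps_cone_into_face
    {V : Type*} [AddCommGroup V] [Module ℝ V]
    (C : Set V) (hconv : Convex ℝ C)
    (hcone : ∀ (r : ℝ), 0 < r → ∀ x ∈ C, r • x ∈ C)
    (hpointed : C ∩ (-C) ⊆ {0})
    (F : Set V) (hFne : F.Nonempty) (hFconv : Convex ℝ F)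
    (hFext : IsExtreme ℝ C F) (h0F : (0 : V) ∈ F)
    (P : V →ₗ[ℝ] V)
    (hPC : P '' C ⊆ C)
    (hPfix : ∀ x ∈ Submodule.span ℝ F, P x = x)
    (hPrange : LinearMap.range P ≤ Submodule.span ℝ F) :
    ∀ ω ∈ C, P ω ∈ F := by
  have h0C : (0 : V) ∈ C := hFext.1 h0F
  -- closure of the cone generated by F under addition
  have hK : ∀ t s : ℝ, 0 ≤ t → 0 ≤ s → ∀ f ∈ F, ∀ g ∈ F,
      ∃ u : ℝ, ∃ h, 0 ≤ u ∧ h ∈ F ∧ t • f + s • g = u • h := by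
    intro t s ht hs f hf g hg
    rcases eq_or_lt_of_le (add_nonneg ht hs) with h0 | hpos
    · have ht0 : t = 0 := by linarith
      have hs0 : s = 0 := by linarith
      exact ⟨0, f, le_refl 0, hf, by simp [ht0, hs0]⟩
    · refine ⟨t + s, (t / (t + s)) • f + (s / (t + s)) • g, le_of_lt hpos, ?_, ?_⟩
      · apply hFconv hf hg (div_nonneg ht hpos.le) (div_nonneg hs hpos.le)
        field_simp
      · rw [smul_add, smul_smul, smul_smul]
        rw [mul_div_cancel₀ _ (ne_of_gt hpos), mul_div_cancel₀ _ (ne_of_gt hpos)]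
  -- every element of span F is a difference of two "cone of F" elements
  have hrep : ∀ x ∈ Submodule.span ℝ F,
      ∃ t s : ℝ, ∃ f g, 0 ≤ t ∧ 0 ≤ s ∧ f ∈ F ∧ g ∈ F ∧ x = t • f - s • g := by
    intro x hx
    induction hx using Submodule.span_induction with
    | mem y hy => exact ⟨1, 0, y, y, zero_le_one, le_refl 0, hy, hy, by simp⟩
    | zero => exact ⟨0, 0, 0, 0, le_refl 0, le_refl 0, h0F, h0F, by simp⟩
    | add y z hy hz ihy ihz =>
      obtain ⟨t, s, f, g, ht, hs, hf, hg, hyeq⟩ := ihy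
      obtain ⟨t', s', f', g', ht', hs', hf', hg', hzeq⟩ := ihz
      obtain ⟨u, h, hu, hh, huh⟩ := hK t t' ht ht' f hf f' hf'
      obtain ⟨u', h', hu', hh', huh'⟩ := hK s s' hs hs' g hg g' hg'
      refine ⟨u, u', h, h', hu, hu', hh, hh', ?_⟩
      rw [hyeq, hzeq, ← huh, ← huh']; abel
    | smul c y hy ih =>
      obtain ⟨t, s, f, g, ht, hs, hf, hg, hyeq⟩ := ih
      rcases le_or_gt 0 c with hc | hc
      · refine ⟨c * t, c * s, f, g, mul_nonneg hc ht, mul_nonneg hc hs, hf, hg, ?_⟩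
        rw [hyeq, smul_sub, smul_smul, smul_smul]
      · refine ⟨-c * s, -c * t, g, f, mul_nonneg (by linarith) hs,
          mul_nonneg (by linarith) ht, hg, hf, ?_⟩
        rw [hyeq]
        module
  -- key: span F ∩ C ⊆ F
  have key : ∀ x ∈ Submodule.span ℝ F, x ∈ C → x ∈ F := by
    intro x hx hxC
    obtain ⟨t, s, f, g, ht, hs, hf, hg, hxeq⟩ := hrep x hx
    -- x + s • g = t • f
    have heq : x + s • g = t • f := by rw [hxeq]; abel
    rcases eq_or_lt_of_le ht with ht0 | htpos
    · -- t = 0 : x = -(s•g), pointedness gives x = 0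
      have hsgC : s • g ∈ C := by
        rcases eq_or_lt_of_le hs with hs0 | hspos
        · simp [← hs0, h0C]
        · exact hcone s hspos g (hFext.1 hg)
      have hx0 : x = 0 := by
        apply hpointed
        refine ⟨hxC, ?_⟩
        have : -x = s • g := by rw [hxeq, ← ht0]; simp
        simp only [Set.mem_neg, this]
        exact hsgC
      rw [hx0]; exact h0F
    · -- t > 0
      -- WLOG s > 0 : replace (s, g) by (1, 0) if s = 0
      obtain ⟨s', g', hs'pos, hg', heq'⟩ :
          ∃ s' : ℝ, ∃ g', 0 < s' ∧ g' ∈ F ∧ x + s' • g' = t • f := by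
        rcases eq_or_lt_of_le hs with hs0 | hspos
        · exact ⟨1, 0, one_pos, h0F, by rw [← heq, ← hs0]; simp⟩
        · exact ⟨s, g, hspos, hg, heq⟩
      set l : ℝ := min (1/2) (1/(2*t)) with hl
      have hlpos : 0 < l := lt_min (by norm_num) (by positivity)
      have hllt : l < 1 := lt_of_le_of_lt (min_le_left _ _) (by norm_num)
      have hlt : l * t ≤ 1/2 := by
        calc l * t ≤ (1/(2*t)) * t := by
              exact mul_le_mul_of_nonneg_right (min_le_right _ _) htpos.le
        _ = 1/2 := by field_simp
      set u : V := (l * t)⁻¹ • x with hu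
      set v : V := (((1 - l) * t)⁻¹ * s') • g' with hv
      have hupos : 0 < (l * t)⁻¹ := by positivity
      have h1l : 0 < 1 - l := by linarith
      have hvpos : 0 < ((1 - l) * t)⁻¹ * s' := by positivity
      have huC : u ∈ C := hcone _ hupos x hxC
      have hvC : v ∈ C := hcone _ hvpos g' (hFext.1 hg')
      have hfseg : f ∈ openSegment ℝ u v := by
        refine ⟨l, 1 - l, hlpos, h1l, by ring, ?_⟩
        rw [hu, hv, smul_smul, smul_smul]
        have e1 : l * (l * t)⁻¹ = t⁻¹ := by
          rw [mul_inv]; field_simp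
        have e2 : (1 - l) * (((1 - l) * t)⁻¹ * s') = t⁻¹ * s' := by
          rw [mul_inv]; field_simp
        rw [e1, e2]
        have : t⁻¹ • x + (t⁻¹ * s') • g' = t⁻¹ • (x + s' • g') := by
          rw [smul_add, smul_smul]
        rw [this, heq', smul_smul, inv_mul_cancel₀ (ne_of_gt htpos), one_smul]
      have huF : u ∈ F := hFext.2 huC hvC hf hfseg
      -- x = (l*t) • u, and l*t ∈ (0,1], so x ∈ F by convexity with 0
      have hxu : x = (l * t) • u := by
        rw [hu, smul_smul, mul_inv_cancel₀ (by positivity), one_smul]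
      have : x = (l * t) • u + (1 - l * t) • (0 : V) := by
        rw [smul_zero, add_zero]; exact hxu
      rw [this]
      exact hFconv huF h0F (by positivity) (by linarith) (by ring)
  intro ω hω
  exact key _ (hPrange ⟨ω, rfl⟩) (hPC ⟨ω, hω, rfl⟩)
end

section
/- Frame measurements are fine-grained (appendix Lemma 'PerfectlyDistinguishingAndFineGrained'). Assume the self-dual cone setup below. Let (ω_j)_{j ∈ Fin d} be pure states (extreme points of Ω) with ∑ j, ω_j = u. Then the measurement with effects e_j := ω_j is fine-grained: every refinement of it is trivial. -/
open scoped RealInnerProductSpace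

variable {V : Type*} [NormedAddCommGroup V] [InnerProductSpace ℝ V]

/-- A measurement: a finite family of effects (elements of the self-dual cone
`C`, acting on states via the inner product) summing to the order unit `u`. -/
def IsMeasurement (C : Set V) (u : V) {n : ℕ} (e : Fin n → V) : Prop :=
  (∀ i, e i ∈ C) ∧ (∑ i, e i) = u

/-- `(e', M)` is a refinement of the measurement `e`: `e'` is a measurement
and the effects of `e'` grouped according to `M` reproduce the effects of
`e`. -/
def IsRefinementOf (C : Set V) (u : V) {n m : ℕ}
    (e' : Fin m → V) (M : Fin m → Fin n) (e : Fin n → V) : Prop :=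
  IsMeasurement C u e' ∧
    ∀ i, (∑ a ∈ Finset.univ.filter (fun a => M a = i), e' a) = e i

/-- A refinement is trivial if each refined effect is a nonnegative multiple
of the effect it refines. -/
def IsTrivialRefinement {n m : ℕ} (e' : Fin m → V) (M : Fin m → Fin n)
    (e : Fin n → V) : Prop :=
  ∀ a, ∃ c : ℝ, 0 ≤ c ∧ e' a = c • e (M a)

/-- A measurement is fine-grained if all of its refinements are trivial. -/
def IsFineGrained (C : Set V) (u : V) {n : ℕ} (e : Fin n → V) : Prop :=
  IsMeasurement C u e ∧
    ∀ (m : ℕ) (e' : Fin m → V) (M : Fin m → Fin n),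
      IsRefinementOf C u e' M e → IsTrivialRefinement e' M e

/-- Frame measurements are fine-grained (appendix Lemma
'PerfectlyDistinguishingAndFineGrained'): the measurement whose effects are
the members of a frame of pure states summing to `u` is fine-grained. -/
theorem frame_measurement_is_finegrained
    [FiniteDimensional ℝ V]
    (C : Set V) (hclosed : IsClosed C) (hconv : Convex ℝ C)
    (hcone : ∀ (r : ℝ), 0 ≤ r → ∀ x ∈ C, r • x ∈ C)
    (hself : C = {x : V | ∀ y ∈ C, 0 ≤ ⟪x, y⟫})
    (u : V) (huC : u ∈ C) (hu : ∀ x ∈ C, x ≠ 0 → 0 < ⟪u, x⟫)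
    (Ω : Set V) (hΩ : Ω = {ω ∈ C | ⟪u, ω⟫ = 1})
    (d : ℕ) (ω : Fin d → V)
    (hpure : ∀ j, ω j ∈ Set.extremePoints ℝ Ω)
    (hsum : (∑ j, ω j) = u) :
    IsFineGrained C u ω := by
  have hωC : ∀ j, ω j ∈ C := by
    intro j
    have := (hpure j).1
    rw [hΩ] at this
    exact this.1
  have hωu : ∀ j, ⟪u, ω j⟫ = 1 := by
    intro j
    have := (hpure j).1
    rw [hΩ] at this
    exact this.2
  have hmeas : IsMeasurement C u ω := ⟨hωC, hsum⟩
  refine ⟨hmeas, ?_⟩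
  intro m e' M href a
  obtain ⟨⟨he'C, he'sum⟩, hgroup⟩ := href
  -- basic cone facts
  have hzeroC : (0 : V) ∈ C := by simpa using hcone 0 le_rfl u huC
  have haddC : ∀ x ∈ C, ∀ y ∈ C, x + y ∈ C := by
    intro x hx y hy
    have hmid : (1/2 : ℝ) • x + (1/2 : ℝ) • y ∈ C :=
      hconv hx hy (by norm_num) (by norm_num) (by norm_num)
    have h := hcone 2 (by norm_num) _ hmid
    rw [smul_add, smul_smul, smul_smul] at h
    norm_num at h
    exact h
  have hunn : ∀ x ∈ C, 0 ≤ ⟪u, x⟫ := by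
    rw [hself] at huC
    exact huC
  have hzero : ∀ x ∈ C, ⟪u, x⟫ = 0 → x = 0 := by
    intro x hx hux
    by_contra hne
    exact absurd hux (ne_of_gt (hu x hx hne))
  set j := M a with hj
  set S := Finset.univ.filter (fun b => M b = j) with hS
  have haS : a ∈ S := by simp [hS, hj]
  set rest := ∑ b ∈ S.erase a, e' b with hrest
  have hsplit : e' a + rest = ω j := by
    rw [hrest, Finset.add_sum_erase _ _ haS]
    exact hgroup j
  have hrestC : rest ∈ C := by
    rw [hrest]
    refine Finset.sum_induction _ (· ∈ C) (fun x y hx hy => haddC x hx y hy) hzeroC ?_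
    intro b _
    exact he'C b
  set t := ⟪u, e' a⟫ with ht
  have htnn : 0 ≤ t := hunn _ (he'C a)
  have hsum1 : t + ⟪u, rest⟫ = 1 := by
    have := congrArg (fun z => ⟪u, z⟫) hsplit
    simpa [inner_add_right, hωu j] using this
  have hrestnn : 0 ≤ ⟪u, rest⟫ := hunn _ hrestC
  have ht1 : t ≤ 1 := by linarith
  rcases eq_or_ne (e' a) 0 with h0 | h0
  · exact ⟨0, le_rfl, by simp [h0]⟩
  have htpos : 0 < t := hu _ (he'C a) h0
  rcases eq_or_lt_of_le ht1 with heq | hlt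
  · -- t = 1, rest = 0
    have hrest0 : rest = 0 := hzero _ hrestC (by linarith)
    refine ⟨1, zero_le_one, ?_⟩
    rw [one_smul]
    rw [hrest0, add_zero] at hsplit
    exact hsplit
  · -- 0 < t < 1, use extremality
    set x := t⁻¹ • e' a with hx
    set y := (1 - t)⁻¹ • rest with hy
    have h1tpos : 0 < 1 - t := by linarith
    have hxΩ : x ∈ Ω := by
      rw [hΩ]
      refine ⟨hcone _ (by positivity) _ (he'C a), ?_⟩
      rw [hx, real_inner_smul_right, ← ht]
      field_simp
    have hyΩ : y ∈ Ω := by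
      rw [hΩ]
      refine ⟨hcone _ (by positivity) _ hrestC, ?_⟩
      rw [hy, real_inner_smul_right]
      have : ⟪u, rest⟫ = 1 - t := by linarith
      rw [this]
      field_simp
    have hseg : ω j ∈ openSegment ℝ x y := by
      refine ⟨t, 1 - t, htpos, h1tpos, by ring, ?_⟩
      rw [hx, hy, smul_smul, smul_smul]
      rw [mul_inv_cancel₀ (ne_of_gt htpos), mul_inv_cancel₀ (ne_of_gt h1tpos),
        one_smul, one_smul]
      exact hsplit
    have hext := (hpure j).2 hxΩ hyΩ hseg
    refine ⟨t, le_of_lt htpos, ?_⟩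
    have : t • x = e' a := by
      rw [hx, smul_smul, mul_inv_cancel₀ (ne_of_gt htpos), one_smul]
    rw [← this, hext]
end

section
/- Bistochasticity of fine-grained measurement statistics (appendix Lemma 'Bistochastic'). Let V be a real inner product space, u ∈ V, and d, N ∈ ℕ. Let (ω_j)_{j ∈ Fin d} satisfy ∑ j, ω_j = u and ⟪u, ω_j⟫ = 1 for all j. Let (ν_l)_{l ∈ Fin N} and c : Fin N → ℝ satisfy 0 ≤ c l ≤ 1, ⟪u, ν_l⟫ = 1, ∑ l, c l • ν_l = u, and ⟪ν_l, ω_j⟫ ≥ 0 for all l, j. Then d ≤ N, and for every probability vector p on Fin d there exists an N × N matrix M with nonnegative entries, all of whose rows and columns sum to 1 (M doubly stochastic), such that, setting ω := ∑ j, p j • ω_j and q l := c l · ⟪ν_l, ω⟫, one has q l = ∑ j, M l j · p̂ j for all l, where p̂ : Fin N → ℝ is p extended by zeros. -/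
open scoped RealInnerProductSpace

lemma sum_fin_split (d N : ℕ) (hdN : d ≤ N) (g : ℕ → ℝ) (b : ℝ) :
    (∑ j : Fin N, (if (j : ℕ) < d then g j else b))
      = (∑ j ∈ Finset.range d, g j) + (N - d : ℕ) * b := by
  rw [Fin.sum_univ_eq_sum_range (fun n => if n < d then g n else b) N]
  rw [Finset.range_eq_Ico, ← Finset.sum_Ico_consecutive _ (Nat.zero_le d) hdN]
  have h1 : (∑ n ∈ Finset.Ico 0 d, (if n < d then g n else b))
      = ∑ n ∈ Finset.range d, g n := by
    rw [← Finset.range_eq_Ico]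
    exact Finset.sum_congr rfl fun n hn => if_pos (Finset.mem_range.mp hn)
  have h2 : (∑ n ∈ Finset.Ico d N, (if n < d then g n else b)) = (N - d : ℕ) * b := by
    rw [Finset.sum_congr rfl (fun n hn =>
        if_neg (not_lt.mpr (Finset.mem_Ico.mp hn).1)),
      Finset.sum_const, Nat.card_Ico, nsmul_eq_mul]
  rw [h1, h2, Finset.range_eq_Ico]

/-- Bistochasticity of fine-grained measurement statistics (appendix Lemma
'Bistochastic'): the number of outcomes of a fine-grained measurement is at
least the maximal number `d` of perfectly distinguishable states, and the
outcome probability vector of the measurement on a state is obtained from the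
(zero-extended) spectral coefficient vector by a doubly stochastic matrix. -/
theorem finegrained_statistics_bistochastic
    {V : Type*} [NormedAddCommGroup V] [InnerProductSpace ℝ V]
    (u : V) (d N : ℕ) (ω : Fin d → V)
    (hωsum : (∑ j, ω j) = u) (hωn : ∀ j, ⟪u, ω j⟫ = 1)
    (ν : Fin N → V) (c : Fin N → ℝ)
    (hc0 : ∀ l, 0 ≤ c l) (hc1 : ∀ l, c l ≤ 1)
    (hνn : ∀ l, ⟪u, ν l⟫ = 1)
    (hcsum : (∑ l, c l • ν l) = u)
    (hpos : ∀ l j, 0 ≤ ⟪ν l, ω j⟫) :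
    d ≤ N ∧
      ∀ p : Fin d → ℝ, (∀ j, 0 ≤ p j) → ((∑ j, p j) = 1) →
        ∃ M : Matrix (Fin N) (Fin N) ℝ,
          (∀ l j, 0 ≤ M l j) ∧
          (∀ l, (∑ j, M l j) = 1) ∧
          (∀ j, (∑ l, M l j) = 1) ∧
          ∀ l, c l * ⟪ν l, (∑ j, p j • ω j)⟫
            = ∑ j : Fin N, M l j * (if h : (j : ℕ) < d then p ⟨(j : ℕ), h⟩ else 0) := by
  -- basic facts
  have hνu : ∀ l, ⟪ν l, u⟫ = 1 := fun l => by rw [real_inner_comm]; exact hνn l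
  have huu : ⟪u, u⟫ = (d : ℝ) := by
    nth_rewrite 2 [← hωsum]
    rw [inner_sum]
    simp [hωn]
  have hcsum' : (∑ l, c l) = (d : ℝ) := by
    have h : ⟪u, u⟫ = ∑ l, c l := by
      nth_rewrite 1 [← hcsum]
      rw [sum_inner]
      simp [real_inner_smul_left, hνu]
    rw [← h, huu]
  have hdN : d ≤ N := by
    have h1 : (∑ l, c l) ≤ ∑ _l : Fin N, (1 : ℝ) :=
      Finset.sum_le_sum fun l _ => hc1 l
    simp only [Finset.sum_const, Finset.card_univ, Fintype.card_fin, nsmul_eq_mul,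
      mul_one, hcsum'] at h1
    exact_mod_cast h1
  -- row partial sums over the first d columns
  have hrow : ∀ l, (∑ j : Fin d, c l * ⟪ν l, ω j⟫) = c l := by
    intro l
    rw [← Finset.mul_sum, ← inner_sum, hωsum, hνu, mul_one]
  -- column sums over l for j < d
  have hcol : ∀ j : Fin d, (∑ l, c l * ⟪ν l, ω j⟫) = 1 := by
    intro j
    have : (∑ l, c l * ⟪ν l, ω j⟫) = ⟪∑ l, c l • ν l, ω j⟫ := by
      rw [sum_inner]; simp [real_inner_smul_left]
    rw [this, hcsum, hωn]
  refine ⟨hdN, fun p hp0 hpsum => ?_⟩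
  classical
  set b : Fin N → ℝ := fun l => (1 - c l) / ((N : ℝ) - d) with hb
  set M : Matrix (Fin N) (Fin N) ℝ :=
    fun l j => if h : (j : ℕ) < d then c l * ⟪ν l, ω ⟨(j : ℕ), h⟩⟫ else b l with hM
  -- the case d = N forces all c l = 1
  have hcase : ∀ l, d = N → c l = 1 := by
    intro l hdn
    have hz : (∑ l, (1 - c l)) = 0 := by
      rw [Finset.sum_sub_distrib, hcsum']
      simp [hdn]
    have := Finset.sum_eq_zero_iff_of_nonneg
      (fun l _ => by linarith [hc1 l]) |>.mp hz l (Finset.mem_univ l)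
    linarith
  have hbnn : ∀ l, 0 ≤ b l := by
    intro l
    rcases eq_or_lt_of_le hdN with h | h
    · simp [hb, hcase l h]
    · apply div_nonneg (by linarith [hc1 l])
      have : (d : ℝ) < N := by exact_mod_cast h
      linarith
  refine ⟨M, ?_, ?_, ?_, ?_⟩
  · intro l j
    by_cases h : (j : ℕ) < d
    · simp only [hM, h, dif_pos]
      exact mul_nonneg (hc0 l) (hpos l _)
    · simp only [hM, h, dif_neg, not_false_iff]
      exact hbnn l
  · -- row sums
    intro l
    have : (∑ j : Fin N, M l j)
        = (∑ j ∈ Finset.range d, (fun n => if h : n < d then c l * ⟪ν l, ω ⟨n, h⟩⟫ else 0) j)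
          + (N - d : ℕ) * b l := by
      rw [← sum_fin_split d N hdN _ (b l)]
      apply Finset.sum_congr rfl
      intro j _
      by_cases h : (j : ℕ) < d <;> simp [hM, h]
    rw [this]
    have hg : (∑ j ∈ Finset.range d,
        (fun n => if h : n < d then c l * ⟪ν l, ω ⟨n, h⟩⟫ else 0) j) = c l := by
      rw [← Fin.sum_univ_eq_sum_range]
      rw [show (∑ j : Fin d, (fun n => if h : n < d then c l * ⟪ν l, ω ⟨n, h⟩⟫ else 0) (j : ℕ))
          = ∑ j : Fin d, c l * ⟪ν l, ω j⟫ from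
        Finset.sum_congr rfl fun j _ => by simp [j.isLt]]
      exact hrow l
    rw [hg]
    rcases eq_or_lt_of_le hdN with h | h
    · simp [← h, hcase l h]
    · have hNd : ((N : ℝ) - d) ≠ 0 := by
        have : (d : ℝ) < N := by exact_mod_cast h
        linarith
      have : ((N - d : ℕ) : ℝ) = (N : ℝ) - d := by
        rw [Nat.cast_sub hdN]
      rw [this, hb]
      field_simp
      ring
  · -- column sums
    intro j
    by_cases h : (j : ℕ) < d
    · have : (∑ l, M l j) = ∑ l, c l * ⟪ν l, ω ⟨(j : ℕ), h⟩⟫ := by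
        apply Finset.sum_congr rfl; intro l _; simp [hM, h]
      rw [this, hcol]
    · have hlt : d < N := by have := j.isLt; omega
      have : (∑ l, M l j) = ∑ l, b l := by
        apply Finset.sum_congr rfl; intro l _; simp [hM, h]
      rw [this]
      have hNd : ((N : ℝ) - d) ≠ 0 := by
        have : (d : ℝ) < N := by exact_mod_cast hlt
        linarith
      rw [hb]
      simp only
      rw [← Finset.sum_div, Finset.sum_sub_distrib, hcsum']
      simp only [Finset.sum_const, Finset.card_univ, Fintype.card_fin, nsmul_eq_mul, mul_one]
      field_simp
  · -- the statistics identity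
    intro l
    have hL : c l * ⟪ν l, (∑ j, p j • ω j)⟫
        = ∑ j : Fin d, c l * ⟪ν l, ω j⟫ * p j := by
      rw [inner_sum, Finset.mul_sum]
      apply Finset.sum_congr rfl
      intro j _
      rw [real_inner_smul_right]; ring
    rw [hL]
    have hR : (∑ j : Fin N, M l j * (if h : (j : ℕ) < d then p ⟨(j : ℕ), h⟩ else 0))
        = ∑ j ∈ Finset.range d,
            (fun n => if h : n < d then c l * ⟪ν l, ω ⟨n, h⟩⟫ * p ⟨n, h⟩ else 0) j
          + (N - d : ℕ) * 0 := by
      rw [← sum_fin_split d N hdN _ 0]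
      apply Finset.sum_congr rfl
      intro j _
      by_cases h : (j : ℕ) < d <;> simp [hM, h]
    rw [hR, mul_zero, add_zero, ← Fin.sum_univ_eq_sum_range]
    apply Finset.sum_congr rfl
    intro j _
    simp [j.isLt]
end
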